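/- arXiv:2201.06414 — 9 statements merged into one kernel-verified Lean document; each statement's English description precedes it below -/
import Mathlib

section
/- Let θ and A be real 2×2 matrices, ε ∈ ℝ and ξ ∈ ℝ². The linear map D : ℝ × ℝ² → ℝ × ℝ² defined by D(a,w) = (εa, aξ + Aw) is a derivation of the Lie algebra 𝔤(θ) (i.e. D[X,Y] = [DX,Y] + [X,DY] for all X,Y ∈ 𝔤(θ)) if and only if Aθ − θA = εθ. -/
open Matrix

/-- The Lie bracket of `𝔤(θ)`: `[(a,w),(b,z)] = (0, a·(θz) − b·(θw))`. -/
def gBracket (θ : Matrix (Fin 2) (Fin 2) ℝ) (X Y : ℝ × (Fin 2 → ℝ)) : ℝ × (Fin 2 → ℝ) :=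
  (0, X.1 • (θ *ᵥ Y.2) - Y.1 • (θ *ᵥ X.2))

theorem stmt0 (θ A : Matrix (Fin 2) (Fin 2) ℝ) (ε : ℝ) (ξ : Fin 2 → ℝ)
    (D : ℝ × (Fin 2 → ℝ) → ℝ × (Fin 2 → ℝ))
    (hD : ∀ p : ℝ × (Fin 2 → ℝ), D p = (ε * p.1, p.1 • ξ + A *ᵥ p.2)) :
    (∀ X Y : ℝ × (Fin 2 → ℝ),
        D (gBracket θ X Y) = gBracket θ (D X) Y + gBracket θ X (D Y)) ↔
      A * θ - θ * A = ε • θ := by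
  constructor
  · intro h
    ext i j
    have := h (1, 0) (0, Pi.single j 1)
    simp [hD, gBracket, Prod.ext_iff, mulVec_add, mulVec_smul,
      ← mulVec_mulVec] at this
    have h2 := this
    simp [mulVec, dotProduct, mul_apply, Fin.sum_univ_two, Matrix.smul_apply, smul_eq_mul,
      Pi.single_apply] at h2 ⊢
    fin_cases i <;> fin_cases j <;> simp [vecHead, vecTail, Pi.smul_apply] at h2 ⊢ <;> linarith [h2.1, h2.2]
  · intro h X Y
    have key : ∀ v : Fin 2 → ℝ, A *ᵥ (θ *ᵥ v) = ε • (θ *ᵥ v) + θ *ᵥ (A *ᵥ v) := by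
      intro v
      have := congrArg (fun M => M *ᵥ v) h
      rw [mulVec_mulVec, mulVec_mulVec, ← smul_mulVec, ← add_mulVec, ← h, sub_add_cancel]
    simp only [hD, gBracket, Prod.mk_add_mk, Prod.mk.injEq, mul_zero]
    refine ⟨by norm_num, ?_⟩
    rw [mulVec_sub, mulVec_smul, mulVec_smul, key, key,
      mulVec_add, mulVec_add, mulVec_smul, mulVec_smul]
    module
end

section
/- Let θ be a real 2×2 matrix with tr θ ≠ 0 or det θ ≠ 0. A linear map D : ℝ × ℝ² → ℝ × ℝ² of the form D(a,w) = (εa, aξ + Aw), with ε ∈ ℝ, ξ ∈ ℝ² and A a real 2×2 matrix, is a derivation of the Lie algebra 𝔤(θ) if and only if ε = 0 and Aθ = θA. -/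
open Matrix

theorem stmt1 (θ A : Matrix (Fin 2) (Fin 2) ℝ) (hθ : θ.trace ≠ 0 ∨ θ.det ≠ 0)
    (ε : ℝ) (ξ : Fin 2 → ℝ)
    (D : ℝ × (Fin 2 → ℝ) → ℝ × (Fin 2 → ℝ))
    (hD : ∀ p : ℝ × (Fin 2 → ℝ), D p = (ε * p.1, p.1 • ξ + A *ᵥ p.2)) :
    (∀ X Y : ℝ × (Fin 2 → ℝ),
        D (gBracket θ X Y) = gBracket θ (D X) Y + gBracket θ X (D Y)) ↔
      ε = 0 ∧ A * θ = θ * A := by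
  constructor
  · intro h
    have key : ∀ z : Fin 2 → ℝ, (A * θ) *ᵥ z = ε • (θ *ᵥ z) + (θ * A) *ᵥ z := by
      intro z
      have hz := h (1, 0) (0, z)
      simp [gBracket, hD, mulVec_zero, smul_smul, Prod.ext_iff] at hz
      ext i
      fin_cases i <;> simp [mulVec, dotProduct, Fin.sum_univ_two, Matrix.mul_apply]
      · linear_combination hz.1
      · linear_combination hz.2
    have keyM : A * θ = ε • θ + θ * A := by
      ext i j
      have := congrFun (key (Pi.single j 1)) i
      simpa [mulVec_single, mul_one] using this
    have htr : ε * θ.trace = 0 := by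
      have h1 : (A * θ).trace = (ε • θ + θ * A).trace := by rw [keyM]
      rw [trace_add, trace_smul, trace_mul_comm] at h1
      have : ε • θ.trace = 0 := by linarith [h1]
      simpa using this
    have hε : ε = 0 := by
      rcases hθ with h0 | h0
      · exact (mul_eq_zero.mp htr).resolve_right h0
      · -- use invertibility
        have hinv : θ * θ⁻¹ = 1 := mul_nonsing_inv θ (isUnit_iff_ne_zero.mpr h0)
        have hinv' : θ⁻¹ * θ = 1 := nonsing_inv_mul θ (isUnit_iff_ne_zero.mpr h0)
        have h2 : A = ε • (1 : Matrix (Fin 2) (Fin 2) ℝ) + θ * (A * θ⁻¹) := by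
          calc A = A * (θ * θ⁻¹) := by rw [hinv, mul_one]
            _ = (A * θ) * θ⁻¹ := by rw [mul_assoc]
            _ = (ε • θ + θ * A) * θ⁻¹ := by rw [keyM]
            _ = ε • (θ * θ⁻¹) + θ * (A * θ⁻¹) := by
                rw [add_mul, smul_mul_assoc, mul_assoc]
            _ = ε • (1 : Matrix (Fin 2) (Fin 2) ℝ) + θ * (A * θ⁻¹) := by rw [hinv]
        have h3 : A.trace = ε • (1 : Matrix (Fin 2) (Fin 2) ℝ).trace + A.trace := by
          conv_lhs => rw [h2]
          rw [trace_add, trace_smul, trace_mul_comm, mul_assoc, hinv', mul_one]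
        have h4 : (1 : Matrix (Fin 2) (Fin 2) ℝ).trace = 2 := by
          simp [trace, Fin.sum_univ_two]
        rw [h4] at h3
        simp only [smul_eq_mul] at h3
        linarith
      
    refine ⟨hε, ?_⟩
    rw [keyM, hε, zero_smul, zero_add]
  · rintro ⟨hε, hc⟩ X Y
    have hcomm : ∀ v : Fin 2 → ℝ, A *ᵥ (θ *ᵥ v) = θ *ᵥ (A *ᵥ v) := by
      intro v
      rw [mulVec_mulVec, mulVec_mulVec, hc]
    simp only [gBracket, hD, hε, zero_mul, zero_smul, zero_add, mulVec_sub,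
      mulVec_smul, hcomm, mulVec_add, Prod.mk_add_mk, Prod.mk.injEq]
    constructor
    · trivial
    · module
end

section
/- Let θ be a real 2×2 matrix, ε ∈ ℝ with ε ≠ 0, η ∈ ℝ², and P an invertible real 2×2 matrix. The linear bijection φ : ℝ × ℝ² → ℝ × ℝ² defined by φ(a,w) = (εa, aη + Pw) is a Lie algebra automorphism of 𝔤(θ) (i.e. φ[X,Y] = [φX, φY] for all X,Y ∈ 𝔤(θ)) if and only if Pθ = ε·θP. -/
open Matrix

theorem stmt2 (θ P : Matrix (Fin 2) (Fin 2) ℝ) (ε : ℝ) (hε : ε ≠ 0)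
    (hP : IsUnit P) (η : Fin 2 → ℝ)
    (φ : ℝ × (Fin 2 → ℝ) → ℝ × (Fin 2 → ℝ))
    (hφ : ∀ p : ℝ × (Fin 2 → ℝ), φ p = (ε * p.1, p.1 • η + P *ᵥ p.2)) :
    (∀ X Y : ℝ × (Fin 2 → ℝ),
        φ (gBracket θ X Y) = gBracket θ (φ X) (φ Y)) ↔
      P * θ = ε • (θ * P) := by
  constructor
  · intro h
    ext i j
    have h2 := congrArg Prod.snd (h (1, 0) (0, Pi.single j 1))
    simp [hφ, gBracket, mulVec_add, mulVec_smul, ← mulVec_mulVec] at h2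
    fin_cases i
    · simp [Matrix.mul_apply, Fin.sum_univ_two]
      linear_combination h2.1
    · simp [Matrix.mul_apply, Fin.sum_univ_two]
      linear_combination h2.2
  · intro h X Y
    have key : ∀ v : Fin 2 → ℝ, P *ᵥ (θ *ᵥ v) = ε • (θ *ᵥ (P *ᵥ v)) := by
      intro v
      rw [mulVec_mulVec, mulVec_mulVec, h]
      simp [smul_mulVec]
    refine Prod.ext (by simp [hφ, gBracket]) ?_
    simp only [hφ, gBracket, mulVec_sub, mulVec_smul, mulVec_add, key, zero_smul, zero_add]
    module
end

section
/- Let θ be a real 2×2 matrix, ε ∈ ℝ with ε² = 1, P an invertible real 2×2 matrix with Pθ = ε·θP, and η ∈ ℝ². Then the map ψ : G(θ) → G(θ) defined by ψ(t,v) = (εt, Pv + ε·Λ^θ_{εt}η) is a bijective group homomorphism of G(θ), i.e. an automorphism of the group G(θ). -/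
open Matrix

/-- The matrix exponential. -/
noncomputable def mexp (B : Matrix (Fin 2) (Fin 2) ℝ) : Matrix (Fin 2) (Fin 2) ℝ :=
  NormedSpace.exp B

/-- `Λ^B_t = ∫₀^t exp(sB) ds`, taken entrywise. -/
noncomputable def Lam (B : Matrix (Fin 2) (Fin 2) ℝ) (t : ℝ) : Matrix (Fin 2) (Fin 2) ℝ :=
  Matrix.of fun i j => ∫ s in (0:ℝ)..t, mexp (s • B) i j

/-- The product of the group `G(θ)`:
`(t₁,v₁)·(t₂,v₂) = (t₁+t₂, v₁ + exp(t₁θ)v₂)`. -/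
noncomputable def Gmul (θ : Matrix (Fin 2) (Fin 2) ℝ) (x y : ℝ × (Fin 2 → ℝ)) :
    ℝ × (Fin 2 → ℝ) :=
  (x.1 + y.1, x.2 + mexp (x.1 • θ) *ᵥ y.2)

section Cont

attribute [local instance] Matrix.linftyOpNormedRing Matrix.linftyOpNormedAlgebra

lemma mexp_entry_continuous (θ : Matrix (Fin 2) (Fin 2) ℝ) (i j : Fin 2) :
    Continuous fun s : ℝ => mexp (s • θ) i j := by
  have h1 : Continuous fun s : ℝ => mexp (s • θ) := by
    unfold mexp
    exact NormedSpace.exp_continuous.comp (continuous_id.smul continuous_const)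
  exact ((Matrix.entryLinearMap ℝ ℝ i j).continuous_of_finiteDimensional).comp h1

end Cont

lemma mexp_intable (θ : Matrix (Fin 2) (Fin 2) ℝ) (i j : Fin 2) (a b : ℝ) :
    IntervalIntegrable (fun s => mexp (s • θ) i j) MeasureTheory.volume a b :=
  (mexp_entry_continuous θ i j).intervalIntegrable a b

lemma mexp_add (θ : Matrix (Fin 2) (Fin 2) ℝ) (s t : ℝ) :
    mexp ((s + t) • θ) = mexp (s • θ) * mexp (t • θ) := by
  rw [add_smul]
  exact Matrix.exp_add_of_commute _ _ (((Commute.refl θ).smul_left s).smul_right t)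

lemma Lam_add (θ : Matrix (Fin 2) (Fin 2) ℝ) (s t : ℝ) :
    Lam θ (s + t) = Lam θ s + mexp (s • θ) * Lam θ t := by
  ext i j
  show (∫ u in (0:ℝ)..(s+t), mexp (u • θ) i j) = _
  rw [← intervalIntegral.integral_add_adjacent_intervals (mexp_intable θ i j 0 s)
    (mexp_intable θ i j s (s+t))]
  have h2 : (∫ u in s..(s+t), mexp (u • θ) i j) =
      ∫ u in (0:ℝ)..t, mexp ((u + s) • θ) i j := by
    rw [intervalIntegral.integral_comp_add_right (fun u => mexp (u • θ) i j) s]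
    norm_num [add_comm]
  have h3 : (∫ u in (0:ℝ)..t, mexp ((u + s) • θ) i j) =
      ∑ k, mexp (s • θ) i k * ∫ u in (0:ℝ)..t, mexp (u • θ) k j := by
    have e1 : (∫ u in (0:ℝ)..t, mexp ((u + s) • θ) i j) =
        ∫ u in (0:ℝ)..t, ∑ k, mexp (s • θ) i k * mexp (u • θ) k j := by
      congr 1; ext u
      rw [add_comm u s, mexp_add]
      rfl
    rw [e1, intervalIntegral.integral_finset_sum (f := fun k u => mexp (s • θ) i k * mexp (u • θ) k j) (fun k _ =>
      ((continuous_const.mul (mexp_entry_continuous θ k j)).intervalIntegrable _ _))]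
    exact Finset.sum_congr rfl fun k _ => intervalIntegral.integral_const_mul _ _
  rw [h2, h3]
  rfl

lemma mexp_conj (θ P : Matrix (Fin 2) (Fin 2) ℝ) (ε : ℝ) (hP : IsUnit P)
    (hcomm : P * θ = ε • (θ * P)) (t : ℝ) :
    mexp ((ε * t) • θ) * P = P * mexp (t • θ) := by
  obtain ⟨u, rfl⟩ := hP
  have key : ((u : Matrix (Fin 2) (Fin 2) ℝ) * (t • θ)) * (↑u⁻¹ : Matrix (Fin 2) (Fin 2) ℝ)
      = (ε * t) • θ := by
    have h1 : (u : Matrix (Fin 2) (Fin 2) ℝ) * (t • θ) = ((ε * t) • θ) * u := by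
      rw [Matrix.mul_smul, hcomm, smul_smul, mul_comm t ε, Matrix.smul_mul]
    rw [h1, mul_assoc, Units.mul_inv, mul_one]
  have := Matrix.exp_units_conj u (t • θ)
  rw [key] at this
  show mexp ((ε * t) • θ) * u = u * mexp (t • θ)
  rw [show mexp ((ε*t) • θ) = NormedSpace.exp ((ε*t) • θ) from rfl, this,
    mul_assoc, Units.inv_mul, mul_one]
  rfl


theorem stmt5 (θ P : Matrix (Fin 2) (Fin 2) ℝ) (ε : ℝ) (hε : ε ^ 2 = 1)
    (hP : IsUnit P) (hcomm : P * θ = ε • (θ * P)) (η : Fin 2 → ℝ)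
    (ψ : ℝ × (Fin 2 → ℝ) → ℝ × (Fin 2 → ℝ))
    (hψ : ∀ p : ℝ × (Fin 2 → ℝ),
      ψ p = (ε * p.1, P *ᵥ p.2 + ε • (Lam θ (ε * p.1) *ᵥ η))) :
    Function.Bijective ψ ∧
      ∀ x y : ℝ × (Fin 2 → ℝ), ψ (Gmul θ x y) = Gmul θ (ψ x) (ψ y) := by
  have hεε : ε * ε = 1 := by nlinarith
  obtain ⟨u, hu⟩ := hP
  constructor
  · apply Function.bijective_iff_has_inverse.mpr
    refine ⟨fun p => (ε * p.1, (↑u⁻¹ : Matrix (Fin 2) (Fin 2) ℝ) *ᵥ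
      (p.2 - ε • (Lam θ p.1 *ᵥ η))), ?_, ?_⟩
    · intro p
      rw [hψ]
      ext
      · show ε * (ε * p.1) = p.1
        rw [← mul_assoc, hεε, one_mul]
      · show ((↑u⁻¹ : Matrix (Fin 2) (Fin 2) ℝ) *ᵥ
          (P *ᵥ p.2 + ε • (Lam θ (ε * p.1) *ᵥ η) - ε • (Lam θ (ε * p.1) *ᵥ η))) _ = _
        rw [add_sub_cancel_right, ← hu, Matrix.mulVec_mulVec, Units.inv_mul, Matrix.one_mulVec]
    · intro p
      rw [hψ]
      ext
      · show ε * (ε * p.1) = p.1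
        rw [← mul_assoc, hεε, one_mul]
      · show (P *ᵥ ((↑u⁻¹ : Matrix (Fin 2) (Fin 2) ℝ) *ᵥ (p.2 - ε • (Lam θ p.1 *ᵥ η)))
          + ε • (Lam θ (ε * (ε * p.1)) *ᵥ η)) _ = _
        rw [← mul_assoc, hεε, one_mul, ← hu, Matrix.mulVec_mulVec, Units.mul_inv,
          Matrix.one_mulVec, sub_add_cancel]
  · intro x y
    rw [hψ, hψ, hψ]
    simp only [Gmul]
    ext
    · show ε * (x.1 + y.1) = ε * x.1 + ε * y.1
      ring
    · show (P *ᵥ (x.2 + mexp (x.1 • θ) *ᵥ y.2) + ε • (Lam θ (ε * (x.1 + y.1)) *ᵥ η)) _ =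
        ((P *ᵥ x.2 + ε • (Lam θ (ε * x.1) *ᵥ η)) + mexp ((ε * x.1) • θ) *ᵥ
          (P *ᵥ y.2 + ε • (Lam θ (ε * y.1) *ᵥ η))) _
      have hL : Lam θ (ε * (x.1 + y.1)) = Lam θ (ε * x.1) + mexp ((ε * x.1) • θ) * Lam θ (ε * y.1) := by
        rw [mul_add]; exact Lam_add θ _ _
      have hconj : mexp ((ε * x.1) • θ) *ᵥ (P *ᵥ y.2) = P *ᵥ (mexp (x.1 • θ) *ᵥ y.2) := by
        rw [Matrix.mulVec_mulVec, Matrix.mulVec_mulVec, mexp_conj θ P ε ⟨u, hu⟩ hcomm]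
      rw [hL]
      simp only [Matrix.add_mulVec, Matrix.mulVec_add, Matrix.mulVec_smul, smul_add,
        ← Matrix.mulVec_mulVec]
      rw [hconj]
      simp only [Pi.add_apply, Pi.smul_apply]
      ring
end

section
/- Let θ be a real 2×2 matrix and Δ a 2-dimensional linear subspace of ℝ × ℝ² with Δ ≠ {0} × ℝ², and let l_Δ ⊆ ℝ² be the line (1-dimensional subspace) such that Δ ∩ ({0} × ℝ²) = {0} × l_Δ. Then Δ is a Lie subalgebra of 𝔤(θ) (i.e. [X,Y] ∈ Δ for all X, Y ∈ Δ) if and only if θ l_Δ ⊆ l_Δ. -/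
open Matrix

theorem stmt9 (θ : Matrix (Fin 2) (Fin 2) ℝ) (Δ : Submodule ℝ (ℝ × (Fin 2 → ℝ)))
    (h2 : Module.finrank ℝ Δ = 2)
    (hne : Δ ≠ (⊥ : Submodule ℝ ℝ).prod (⊤ : Submodule ℝ (Fin 2 → ℝ)))
    (l : Submodule ℝ (Fin 2 → ℝ)) (hl : Module.finrank ℝ l = 1)
    (hΔl : Δ ⊓ (⊥ : Submodule ℝ ℝ).prod (⊤ : Submodule ℝ (Fin 2 → ℝ)) =
      (⊥ : Submodule ℝ ℝ).prod l) :
    (∀ X ∈ Δ, ∀ Y ∈ Δ, gBracket θ X Y ∈ Δ) ↔ ∀ x ∈ l, θ *ᵥ x ∈ l := by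
  -- characterization: (0, v) ∈ Δ ↔ v ∈ l
  have hchar : ∀ v : Fin 2 → ℝ, ((0 : ℝ), v) ∈ Δ ↔ v ∈ l := by
    intro v
    constructor
    · intro h
      have : ((0 : ℝ), v) ∈ Δ ⊓ (⊥ : Submodule ℝ ℝ).prod (⊤ : Submodule ℝ (Fin 2 → ℝ)) :=
        ⟨h, by simp [Submodule.mem_prod]⟩
      rw [hΔl] at this
      exact this.2
    · intro h
      have : ((0 : ℝ), v) ∈ (⊥ : Submodule ℝ ℝ).prod l := ⟨by simp, h⟩
      rw [← hΔl] at this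
      exact this.1
  -- there is an element of Δ with nonzero first coordinate
  have hX0 : ∃ X ∈ Δ, X.1 ≠ 0 := by
    by_contra h
    push_neg at h
    have hle : Δ ≤ (⊥ : Submodule ℝ ℝ).prod (⊤ : Submodule ℝ (Fin 2 → ℝ)) := by
      intro x hx
      exact ⟨by simpa using h x hx, trivial⟩
    have hΔeq : Δ = (⊥ : Submodule ℝ ℝ).prod l := by
      rw [← hΔl, inf_eq_left.mpr hle]
    have hmap : l.map (LinearMap.inr ℝ ℝ (Fin 2 → ℝ)) = (⊥ : Submodule ℝ ℝ).prod l :=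
      Submodule.map_inr l
    have hinj : Function.Injective (LinearMap.inr ℝ ℝ (Fin 2 → ℝ)) := by
      intro a b h
      simpa using congrArg Prod.snd h
    have hfr : Module.finrank ℝ ((⊥ : Submodule ℝ ℝ).prod l) = 1 := by
      rw [← hmap, ← LinearEquiv.finrank_eq (Submodule.equivMapOfInjective _ hinj l)]
      exact hl
    rw [hΔeq, hfr] at h2
    norm_num at h2
  obtain ⟨X0, hX0Δ, ha⟩ := hX0
  constructor
  · intro hbr x hx
    have h1 : ((0 : ℝ), x) ∈ Δ := (hchar x).2 hx
    have h2' := hbr X0 hX0Δ ((0 : ℝ), x) h1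
    have h3 : (X0.1 • (θ *ᵥ x)) ∈ l := by
      have : gBracket θ X0 ((0 : ℝ), x) = ((0 : ℝ), X0.1 • (θ *ᵥ x)) := by
        simp [gBracket]
      rw [this] at h2'
      exact (hchar _).1 h2'
    have := l.smul_mem X0.1⁻¹ h3
    rwa [smul_smul, inv_mul_cancel₀ ha, one_smul] at this
  · intro hθ X hX Y hY
    have hZ : (Y.1 • X - X.1 • Y) ∈ Δ := Δ.sub_mem (Δ.smul_mem _ hX) (Δ.smul_mem _ hY)
    have hZ1 : (Y.1 • X - X.1 • Y).1 = 0 := by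
      simp [mul_comm]
    have hZ' : ((0 : ℝ), Y.1 • X.2 - X.1 • Y.2) ∈ Δ := by
      have : ((0 : ℝ), Y.1 • X.2 - X.1 • Y.2) = Y.1 • X - X.1 • Y := by
        ext
        · simp [mul_comm]
        · simp
      rw [this]; exact hZ
    have hmem : (Y.1 • X.2 - X.1 • Y.2) ∈ l := (hchar _).1 hZ'
    have hθmem : θ *ᵥ (Y.1 • X.2 - X.1 • Y.2) ∈ l := hθ _ hmem
    have hΔmem : ((0 : ℝ), θ *ᵥ (Y.1 • X.2 - X.1 • Y.2)) ∈ Δ := (hchar _).2 hθmem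
    have hneg := Δ.neg_mem hΔmem
    have : gBracket θ X Y = -((0 : ℝ), θ *ᵥ (Y.1 • X.2 - X.1 • Y.2)) := by
      simp [gBracket, Matrix.mulVec_sub, Matrix.mulVec_smul]
    rw [this]
    exact hneg
end

section
/- Let θ and A be real 2×2 matrices with Aθ = θA and A ≠ 0, let ξ ∈ ℝ², and let n ∈ ℝ² be nonzero, with n^⊥ = {x ∈ ℝ² : ⟨x,n⟩ = 0}. Assume that at least one of the following holds: θ(n^⊥) ⊄ n^⊥, or A(n^⊥) ⊄ n^⊥, or ξ ∉ n^⊥. Then 0 is a regular value of F: for every (t,v) ∈ ℝ × ℝ² with F(t,v) = 0, the (Fréchet) derivative of F at (t,v) is a nonzero linear functional on ℝ × ℝ². -/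
open Matrix

/-- `F(t,v) = ⟨exp(−tθ)(Av + Λ^θ_t ξ), n⟩`. -/
noncomputable def Fu (θ A : Matrix (Fin 2) (Fin 2) ℝ) (ξ n : Fin 2 → ℝ)
    (p : ℝ × (Fin 2 → ℝ)) : ℝ :=
  (mexp ((-p.1) • θ) *ᵥ (A *ᵥ p.2 + Lam θ p.1 *ᵥ ξ)) ⬝ᵥ n

section Aux

attribute [local instance] Matrix.linftyOpNormedRing Matrix.linftyOpNormedAlgebra

noncomputable def entryCLM (i j : Fin 2) : Matrix (Fin 2) (Fin 2) ℝ →L[ℝ] ℝ :=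
  LinearMap.toContinuousLinearMap
    { toFun := fun M => M i j
      map_add' := fun _ _ => rfl
      map_smul' := fun _ _ => rfl }

lemma hasDerivAt_mexp_entry (θ : Matrix (Fin 2) (Fin 2) ℝ) (i j : Fin 2) (t : ℝ) :
    HasDerivAt (fun u : ℝ => mexp (u • θ) i j) ((θ * mexp (t • θ)) i j) t := by
  have h : HasDerivAt (fun u : ℝ => mexp (u • θ)) (θ * mexp (t • θ)) t :=
    hasDerivAt_exp_smul_const' θ t
  exact (entryCLM i j).hasFDerivAt.comp_hasDerivAt t h

lemma mexp_entry_diff (θ : Matrix (Fin 2) (Fin 2) ℝ) (i j : Fin 2) :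
    Differentiable ℝ (fun u : ℝ => mexp (u • θ) i j) :=
  fun t => (hasDerivAt_mexp_entry θ i j t).differentiableAt

lemma cont_mexp_entry (θ : Matrix (Fin 2) (Fin 2) ℝ) (i j : Fin 2) :
    Continuous (fun u : ℝ => mexp (u • θ) i j) :=
  (mexp_entry_diff θ i j).continuous

lemma hasDerivAt_int_entry (θ : Matrix (Fin 2) (Fin 2) ℝ) (i j : Fin 2) (t : ℝ) :
    HasDerivAt (fun u : ℝ => ∫ s in (0:ℝ)..u, mexp (s • θ) i j) (mexp (t • θ) i j) t :=
  ((cont_mexp_entry θ i j).integral_hasStrictDerivAt 0 t).hasDerivAt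

lemma int_entry_diff (θ : Matrix (Fin 2) (Fin 2) ℝ) (i j : Fin 2) :
    Differentiable ℝ (fun u : ℝ => ∫ s in (0:ℝ)..u, mexp (s • θ) i j) :=
  fun t => (hasDerivAt_int_entry θ i j t).differentiableAt

lemma mexp_neg_mul (θ : Matrix (Fin 2) (Fin 2) ℝ) (t : ℝ) :
    mexp ((-t) • θ) * mexp (t • θ) = 1 := by
  rw [mexp, mexp,
    ← Matrix.exp_add_of_commute _ _ (((Commute.refl θ).smul_left (-t)).smul_right t)]
  simp [NormedSpace.exp_zero]

lemma mexp_commute (θ A : Matrix (Fin 2) (Fin 2) ℝ) (hcomm : A * θ = θ * A) (t : ℝ) :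
    A * mexp (t • θ) = mexp (t • θ) * A := by
  have hc : Commute A θ := hcomm
  exact ((hc.smul_right t).exp_right)

end Aux

lemma Fu_eq (θ A : Matrix (Fin 2) (Fin 2) ℝ) (ξ n : Fin 2 → ℝ) :
    Fu θ A ξ n = fun p => ∑ i, (∑ j, mexp ((-p.1) • θ) i j *
      ((∑ k, A j k * p.2 k) + (∑ k, (∫ s in (0:ℝ)..p.1, mexp (s • θ) j k) * ξ k))) * n i := by
  funext p
  simp [Fu, Matrix.mulVec, dotProduct, Lam]

lemma Fu_diff (θ A : Matrix (Fin 2) (Fin 2) ℝ) (ξ n : Fin 2 → ℝ) :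
    Differentiable ℝ (Fu θ A ξ n) := by
  rw [Fu_eq]
  apply Differentiable.fun_sum
  intro i _
  apply Differentiable.mul_const
  apply Differentiable.fun_sum
  intro j _
  apply Differentiable.mul
  · intro p
    exact DifferentiableAt.comp p (mexp_entry_diff θ i j _) (differentiable_fst.neg p)
  · apply Differentiable.add
    · apply Differentiable.fun_sum
      intro k _
      exact (((ContinuousLinearMap.proj k).comp
        (ContinuousLinearMap.snd ℝ ℝ (Fin 2 → ℝ))).differentiable).const_mul _
    · apply Differentiable.fun_sum
      intro k _
      intro p
      exact (DifferentiableAt.comp p (int_entry_diff θ j k _)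
        (differentiable_fst p)).mul_const _

lemma exists_smul_of_perp (a x n : Fin 2 → ℝ) (hn : n ≠ 0) (ha : a ⬝ᵥ n = 0)
    (hx : x ⬝ᵥ n = 0) (ha0 : a ≠ 0) : ∃ c : ℝ, x = c • a := by
  have ha' : a 0 * n 0 + a 1 * n 1 = 0 := by
    simpa [dotProduct, Fin.sum_univ_two] using ha
  have hx' : x 0 * n 0 + x 1 * n 1 = 0 := by
    simpa [dotProduct, Fin.sum_univ_two] using hx
  have hdet : x 0 * a 1 = x 1 * a 0 := by
    have hn' : n 0 ≠ 0 ∨ n 1 ≠ 0 := by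
      by_contra h
      push_neg at h
      exact hn (funext fun i => by fin_cases i <;> simp [h.1, h.2])
    rcases hn' with h | h
    · have h2 : (x 0 * a 1 - x 1 * a 0) * n 0 = 0 := by linear_combination a 1 * hx' - x 1 * ha'
      rcases mul_eq_zero.mp h2 with h' | h'
      · linarith
      · exact absurd h' h
    · have h2 : (x 0 * a 1 - x 1 * a 0) * n 1 = 0 := by linear_combination x 0 * ha' - a 0 * hx'
      rcases mul_eq_zero.mp h2 with h' | h'
      · linarith
      · exact absurd h' h
  by_cases h : a 0 = 0
  · have h1 : a 1 ≠ 0 := fun h1 => ha0 (funext fun i => by fin_cases i <;> simp [h, h1])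
    have hx0 : x 0 = 0 := by
      have := hdet
      rw [h, mul_zero] at this
      exact (mul_eq_zero.mp this).resolve_right h1
    refine ⟨x 1 / a 1, funext fun i => ?_⟩
    fin_cases i
    · simp [Pi.smul_apply, smul_eq_mul, h, hx0]
    · simp [Pi.smul_apply, smul_eq_mul]
      field_simp
  · refine ⟨x 0 / a 0, funext fun i => ?_⟩
    fin_cases i
    · simp [Pi.smul_apply, smul_eq_mul]
      field_simp
    · simp [Pi.smul_apply, smul_eq_mul]
      field_simp
      linarith [hdet]
theorem stmt12 (θ A : Matrix (Fin 2) (Fin 2) ℝ) (hcomm : A * θ = θ * A) (hA : A ≠ 0)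
    (ξ n : Fin 2 → ℝ) (hn : n ≠ 0)
    (hlarc : (¬ ∀ x : Fin 2 → ℝ, x ⬝ᵥ n = 0 → (θ *ᵥ x) ⬝ᵥ n = 0) ∨
             (¬ ∀ x : Fin 2 → ℝ, x ⬝ᵥ n = 0 → (A *ᵥ x) ⬝ᵥ n = 0) ∨
             ξ ⬝ᵥ n ≠ 0) :
    ∀ p : ℝ × (Fin 2 → ℝ), Fu θ A ξ n p = 0 → fderiv ℝ (Fu θ A ξ n) p ≠ 0 := by
  rintro ⟨t, v⟩ hF hd
  have h0 : HasFDerivAt (Fu θ A ξ n) 0 (t, v) :=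
    hd ▸ (Fu_diff θ A ξ n (t, v)).hasFDerivAt
  -- Fact (a): the derivative in the `v` direction vanishes
  have ha : ∀ h : Fin 2 → ℝ, (mexp ((-t) • θ) *ᵥ (A *ᵥ h)) ⬝ᵥ n = 0 := by
    intro h
    have hvh : HasDerivAt (fun s : ℝ => v + s • h) h 0 := by
      simpa using (((hasDerivAt_id (0:ℝ)).smul_const h).const_add v)
    have hγ : HasDerivAt (fun s : ℝ => ((t : ℝ), v + s • h)) ((0 : ℝ), h) 0 :=
      (hasDerivAt_const 0 t).prodMk hvh
    have h0' : HasFDerivAt (𝕜 := ℝ) (Fu θ A ξ n) 0 (t, v + (0:ℝ) • h) := by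
      have hv : v + (0:ℝ) • h = v := by simp
      rw [hv]
      exact h0
    have h1 : HasDerivAt (fun s : ℝ => Fu θ A ξ n (t, v + s • h)) 0 0 := by
      have := h0'.comp_hasDerivAt 0 hγ
      simp at this
      exact this
    have heq : (fun s : ℝ => Fu θ A ξ n (t, v + s • h)) =
        fun s : ℝ => Fu θ A ξ n (t, v) + s * ((mexp ((-t) • θ) *ᵥ (A *ᵥ h)) ⬝ᵥ n) := by
      funext s
      simp only [Fu, Matrix.mulVec_add, Matrix.mulVec_smul, add_dotProduct,
        smul_dotProduct, smul_eq_mul]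
      ring
    have h2 : HasDerivAt (fun s : ℝ => Fu θ A ξ n (t, v + s • h))
        ((mexp ((-t) • θ) *ᵥ (A *ᵥ h)) ⬝ᵥ n) 0 := by
      rw [heq]
      simpa using (((hasDerivAt_id (0:ℝ)).mul_const
        ((mexp ((-t) • θ) *ᵥ (A *ᵥ h)) ⬝ᵥ n)).const_add (Fu θ A ξ n (t, v)))
    exact h2.unique h1
  -- Fact (**): ⟨A x, n⟩ = 0 for every x
  have hstar : ∀ x : Fin 2 → ℝ, (A *ᵥ x) ⬝ᵥ n = 0 := by
    intro x
    have h1 := ha (mexp (t • θ) *ᵥ x)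
    rwa [Matrix.mulVec_mulVec, Matrix.mulVec_mulVec, mul_assoc,
      mexp_commute θ A hcomm, ← mul_assoc, mexp_neg_mul, one_mul] at h1
  -- a nonzero vector in the range of A
  obtain ⟨u, hu⟩ : ∃ u, A *ᵥ u ≠ 0 := by
    by_contra h
    push_neg at h
    apply hA
    ext i j
    have := congrFun (h (Pi.single j 1)) i
    simpa [Matrix.mulVec_single] using this
  -- θ preserves n-perp
  have hperp : ∀ x : Fin 2 → ℝ, x ⬝ᵥ n = 0 → (θ *ᵥ x) ⬝ᵥ n = 0 := by
    intro x hx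
    obtain ⟨c, rfl⟩ := exists_smul_of_perp (A *ᵥ u) x n hn (hstar u) hx hu
    rw [Matrix.mulVec_smul, smul_dotProduct, Matrix.mulVec_mulVec, ← hcomm,
      ← Matrix.mulVec_mulVec, hstar, smul_zero]
  -- Fact (b): the derivative in the `t` direction
  have hb0 : HasDerivAt (fun s : ℝ => Fu θ A ξ n (s, v)) 0 t := by
    have := h0.comp_hasDerivAt t ((hasDerivAt_id t).prodMk (hasDerivAt_const t v))
    simp at this
    exact this
  have hbsum : HasDerivAt (fun s : ℝ => Fu θ A ξ n (s, v))
      (∑ i, (∑ j, ((-(θ * mexp ((-t) • θ))) i j *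
          ((∑ k, A j k * v k) + ∑ k, (∫ s in (0:ℝ)..t, mexp (s • θ) j k) * ξ k) +
        mexp ((-t) • θ) i j * (0 + ∑ k, mexp (t • θ) j k * ξ k))) * n i) t := by
    simp only [Fu_eq]
    apply HasDerivAt.fun_sum
    intro i _
    apply HasDerivAt.mul_const
    apply HasDerivAt.fun_sum
    intro j _
    have hmneg : HasDerivAt (fun s : ℝ => mexp ((-s) • θ) i j)
        ((-(θ * mexp ((-t) • θ))) i j) t := by
      have h1 := hasDerivAt_mexp_entry θ i j (-t)
      have h2 : HasDerivAt (fun s : ℝ => -s) (-1) t := (hasDerivAt_id t).neg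
      have h3 := h1.comp t h2
      simpa [Function.comp_def, Matrix.neg_apply] using h3
    exact hmneg.mul ((hasDerivAt_const t _).add
      (HasDerivAt.fun_sum fun k _ => (hasDerivAt_int_entry θ j k t).mul_const (ξ k)))
  have hD0 := hbsum.unique hb0
  -- rewrite the sum-form derivative into matrix form
  have hDeq : ((-(θ * mexp ((-t) • θ))) *ᵥ (A *ᵥ v + Lam θ t *ᵥ ξ)) ⬝ᵥ n +
      ((mexp ((-t) • θ) * mexp (t • θ)) *ᵥ ξ) ⬝ᵥ n =
      ∑ i, (∑ j, ((-(θ * mexp ((-t) • θ))) i j *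
          ((∑ k, A j k * v k) + ∑ k, (∫ s in (0:ℝ)..t, mexp (s • θ) j k) * ξ k) +
        mexp ((-t) • θ) i j * (0 + ∑ k, mexp (t • θ) j k * ξ k))) * n i := by
    simp [Matrix.mulVec, dotProduct, Matrix.mul_apply, Lam, Fin.sum_univ_two]
    ring
  rw [hD0, mexp_neg_mul, Matrix.one_mulVec, Matrix.neg_mulVec, ← Matrix.mulVec_mulVec,
    neg_dotProduct] at hDeq
  -- conclude
  have hFw : (mexp ((-t) • θ) *ᵥ (A *ᵥ v + Lam θ t *ᵥ ξ)) ⬝ᵥ n = 0 := hF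
  have hξ : ξ ⬝ᵥ n = 0 := by
    have hpw := hperp _ hFw
    rw [Matrix.mulVec_mulVec] at hDeq
    rw [Matrix.mulVec_mulVec] at hpw
    linarith
  rcases hlarc with h | h | h
  · exact h hperp
  · exact h fun x _ => hstar x
  · exact h hξ
end

section
/- Let θ and A be real 2×2 matrices with Aθ = θA and A ≠ 0, let ξ ∈ ℝ², and let n ∈ ℝ² be nonzero. Let (t,v) ∈ ℝ × ℝ² satisfy F(t,v) = 0, let (a,w) ∈ ℝ × ℝ², and define γ : ℝ → ℝ by γ(s) = F((t,v)·exp_G(s·(a,w))), where the product is taken in G(θ). Then either γ(s) = 0 for all s ∈ ℝ, or there exists δ > 0 such that γ(s) ≠ 0 for all s with 0 < |s| < δ. -/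
open Matrix

namespace Stmt16Aux

attribute [local instance] Matrix.linftyOpNormedRing Matrix.linftyOpNormedAlgebra

lemma analytic_exp_entry (B : Matrix (Fin 2) (Fin 2) ℝ) (i j : Fin 2) :
    AnalyticOnNhd ℝ (fun u : ℝ => mexp (u • B) i j) Set.univ := by
  intro x _
  have h1 : AnalyticAt ℝ (NormedSpace.exp :
      Matrix (Fin 2) (Fin 2) ℝ → Matrix (Fin 2) (Fin 2) ℝ) (x • B) :=
    NormedSpace.analyticAt_exp_of_mem_ball _
      (by simp [NormedSpace.expSeries_radius_eq_top])
  have h2 : AnalyticAt ℝ (fun u : ℝ => u • B) x :=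
    ((ContinuousLinearMap.id ℝ ℝ).smulRight B).analyticAt x
  have h3 : AnalyticAt ℝ (fun M : Matrix (Fin 2) (Fin 2) ℝ => M i j)
      (NormedSpace.exp (x • B)) :=
    let l : Matrix (Fin 2) (Fin 2) ℝ →ₗ[ℝ] ℝ :=
      (LinearMap.proj j).comp (LinearMap.proj (R := ℝ)
        (φ := fun _ : Fin 2 => Fin 2 → ℝ) i)
    (LinearMap.toContinuousLinearMap l).analyticAt _
  have h12 : AnalyticAt ℝ ((NormedSpace.exp) ∘ (fun u : ℝ => u • B)) x :=
    AnalyticAt.comp (f := fun u : ℝ => u • B) h1 h2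
  have h4 : AnalyticAt ℝ ((fun M : Matrix (Fin 2) (Fin 2) ℝ => M i j) ∘
      ((NormedSpace.exp) ∘ (fun u : ℝ => u • B))) x :=
    AnalyticAt.comp (f := (NormedSpace.exp) ∘ (fun u : ℝ => u • B)) h3 h12
  simpa [Function.comp_def, mexp] using h4


lemma cont_entry (B : Matrix (Fin 2) (Fin 2) ℝ) (i j : Fin 2) :
    Continuous fun u : ℝ => mexp (u • B) i j :=
  continuous_iff_continuousAt.2 fun x => ((analytic_exp_entry B i j) x trivial).continuousAt

lemma intble (B : Matrix (Fin 2) (Fin 2) ℝ) (i j : Fin 2) (x y : ℝ) :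
    IntervalIntegrable (fun u : ℝ => mexp (u • B) i j) MeasureTheory.volume x y :=
  (cont_entry B i j).intervalIntegrable x y

lemma mexp_add (B : Matrix (Fin 2) (Fin 2) ℝ) (x y : ℝ) :
    mexp ((x + y) • B) = mexp (x • B) * mexp (y • B) := by
  have h : Commute (x • B) (y • B) := ((Commute.refl B).smul_left x).smul_right y
  rw [mexp, mexp, mexp, add_smul]
  exact Matrix.exp_add_of_commute _ _ h

lemma mexp_zero : mexp ((0:ℝ) • B) = 1 := by
  rw [mexp, zero_smul, NormedSpace.exp_zero]

lemma Lam_zero (B : Matrix (Fin 2) (Fin 2) ℝ) : Lam B 0 = 0 := by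
  ext i j; simp [Lam]


lemma mexp_mul_neg (B : Matrix (Fin 2) (Fin 2) ℝ) (x : ℝ) :
    mexp ((-x) • B) * mexp (x • B) = 1 := by
  have h : -x + x = 0 := by ring
  rw [← mexp_add, h, mexp_zero]

lemma Lam_add (B : Matrix (Fin 2) (Fin 2) ℝ) (x y : ℝ) :
    Lam B (x + y) = Lam B x + mexp (x • B) * Lam B y := by
  ext i j
  simp only [Lam, Matrix.add_apply, Matrix.mul_apply, Matrix.of_apply]
  rw [← intervalIntegral.integral_add_adjacent_intervals (intble B i j 0 x)
    (intble B i j x (x + y))]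
  congr 1
  have h1 : ∫ u in x..(x + y), mexp (u • B) i j
      = ∫ u in (0:ℝ)..y, mexp ((u + x) • B) i j := by
    rw [intervalIntegral.integral_comp_add_right (a := (0:ℝ)) (b := y)
      (fun u => mexp (u • B) i j) x]
    norm_num [add_comm]
  rw [h1]
  have h2 : ∀ u : ℝ, mexp ((u + x) • B) i j
      = ∑ k, mexp (x • B) i k * mexp (u • B) k j := by
    intro u; rw [add_comm u x, mexp_add, Matrix.mul_apply]
  simp_rw [h2]
  rw [intervalIntegral.integral_finset_sum (f := fun k u => mexp (x • B) i k * mexp (u • B) k j)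
    (fun k _ => (continuous_const.mul (cont_entry B k j)).intervalIntegrable _ _)]
  exact Finset.sum_congr rfl fun k _ => by rw [intervalIntegral.integral_const_mul]

lemma comm_mexp {A B : Matrix (Fin 2) (Fin 2) ℝ} (h : A * B = B * A) (x : ℝ) :
    A * mexp (x • B) = mexp (x • B) * A :=
  (((Commute.smul_right (h : Commute A B) x).exp_right) : _)

lemma comm_Lam {A B : Matrix (Fin 2) (Fin 2) ℝ} (h : A * B = B * A) (x : ℝ) :
    A * Lam B x = Lam B x * A := by
  ext i j
  simp only [Lam, Matrix.mul_apply, Matrix.of_apply]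
  calc ∑ k, A i k * ∫ u in (0:ℝ)..x, mexp (u • B) k j
      = ∑ k, ∫ u in (0:ℝ)..x, A i k * mexp (u • B) k j := by
        exact Finset.sum_congr rfl fun k _ => by
          rw [intervalIntegral.integral_const_mul]
    _ = ∫ u in (0:ℝ)..x, ∑ k, A i k * mexp (u • B) k j := by
        rw [intervalIntegral.integral_finset_sum (f := fun k u => A i k * mexp (u • B) k j)
          (fun k _ => (continuous_const.mul (cont_entry B k j)).intervalIntegrable _ _)]
    _ = ∫ u in (0:ℝ)..x, ∑ k, mexp (u • B) i k * A k j := by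
        congr 1; ext u
        have := comm_mexp h u
        calc ∑ k, A i k * mexp (u • B) k j = (A * mexp (u • B)) i j := by
              rw [Matrix.mul_apply]
          _ = (mexp (u • B) * A) i j := by rw [this]
          _ = ∑ k, mexp (u • B) i k * A k j := by rw [Matrix.mul_apply]
    _ = ∑ k, ∫ u in (0:ℝ)..x, mexp (u • B) i k * A k j := by
        rw [intervalIntegral.integral_finset_sum (f := fun k u => mexp (u • B) i k * A k j)
          (fun k _ => ((cont_entry B i k).mul continuous_const).intervalIntegrable _ _)]
    _ = ∑ k, (∫ u in (0:ℝ)..x, mexp (u • B) i k) * A k j := by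
        exact Finset.sum_congr rfl fun k _ => by
          rw [intervalIntegral.integral_mul_const]

lemma mexp_neg_mul_Lam (B : Matrix (Fin 2) (Fin 2) ℝ) (x : ℝ) :
    mexp ((-x) • B) * Lam B x = Lam (-B) x := by
  ext i j
  simp only [Lam, Matrix.mul_apply, Matrix.of_apply]
  calc ∑ k, mexp ((-x) • B) i k * ∫ u in (0:ℝ)..x, mexp (u • B) k j
      = ∫ u in (0:ℝ)..x, ∑ k, mexp ((-x) • B) i k * mexp (u • B) k j := by
        rw [intervalIntegral.integral_finset_sum
          (f := fun k u => mexp ((-x) • B) i k * mexp (u • B) k j)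
          (fun k _ => (continuous_const.mul (cont_entry B k j)).intervalIntegrable _ _)]
        exact Finset.sum_congr rfl fun k _ => by
          rw [intervalIntegral.integral_const_mul]
    _ = ∫ u in (0:ℝ)..x, mexp ((u + -x) • B) i j := by
        congr 1; ext u
        have h : u + -x = -x + u := by ring
        rw [h, mexp_add, Matrix.mul_apply]
    _ = ∫ u in (-x)..(0:ℝ), mexp (u • B) i j := by
        rw [intervalIntegral.integral_comp_add_right (fun u => mexp (u • B) i j) (-x)]
        norm_num
    _ = ∫ u in (0:ℝ)..x, mexp (u • (-B)) i j := by
        have : ∀ u : ℝ, mexp (u • (-B)) i j = mexp ((-u) • B) i j := by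
          intro u; rw [smul_neg, neg_smul]
        simp_rw [this]
        rw [intervalIntegral.integral_comp_neg (fun u => mexp (u • B) i j)]
        norm_num

lemma Lam_mulVec_dot (B : Matrix (Fin 2) (Fin 2) ℝ) (x : ℝ) (m n : Fin 2 → ℝ) :
    (Lam B x *ᵥ m) ⬝ᵥ n = ∫ u in (0:ℝ)..x, (mexp (u • B) *ᵥ m) ⬝ᵥ n := by
  simp only [dotProduct, Matrix.mulVec, Lam, Matrix.of_apply]
  calc ∑ i, (∑ j, (∫ u in (0:ℝ)..x, mexp (u • B) i j) * m j) * n i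
      = ∑ i, ∫ u in (0:ℝ)..x, (∑ j, mexp (u • B) i j * m j) * n i := by
        refine Finset.sum_congr rfl fun i _ => ?_
        calc (∑ j, (∫ u in (0:ℝ)..x, mexp (u • B) i j) * m j) * n i
            = (∑ j, ∫ u in (0:ℝ)..x, mexp (u • B) i j * m j) * n i := by
              congr 1
              exact Finset.sum_congr rfl fun j _ =>
                (intervalIntegral.integral_mul_const _ _).symm
          _ = (∫ u in (0:ℝ)..x, ∑ j, mexp (u • B) i j * m j) * n i := by
              rw [intervalIntegral.integral_finset_sum (f := fun j u => mexp (u • B) i j * m j)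
                (fun j _ => ((cont_entry B i j).mul continuous_const).intervalIntegrable _ _)]
          _ = ∫ u in (0:ℝ)..x, (∑ j, mexp (u • B) i j * m j) * n i :=
              (intervalIntegral.integral_mul_const _ _).symm
    _ = ∫ u in (0:ℝ)..x, ∑ i, (∑ j, mexp (u • B) i j * m j) * n i := by
        rw [intervalIntegral.integral_finset_sum]
        intro i _
        exact (((continuous_finset_sum _ fun j _ => (cont_entry B i j).mul continuous_const :
          Continuous fun u : ℝ => (∑ j, mexp (u • B) i j * m j))).mul
          continuous_const).intervalIntegrable _ _


lemma analytic_dotexp (B : Matrix (Fin 2) (Fin 2) ℝ) (b : ℝ) (c n : Fin 2 → ℝ) :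
    AnalyticOnNhd ℝ (fun s : ℝ => (mexp ((s * b) • B) *ᵥ c) ⬝ᵥ n) Set.univ := by
  have hinner : AnalyticOnNhd ℝ (fun s : ℝ => s * b) Set.univ :=
    (analyticOnNhd_id).mul analyticOnNhd_const
  have hentry : ∀ i j : Fin 2,
      AnalyticOnNhd ℝ (fun s : ℝ => mexp ((s * b) • B) i j) Set.univ := fun i j =>
    (analytic_exp_entry B i j).comp hinner (Set.mapsTo_univ _ _)
  have h : (fun s : ℝ => (mexp ((s * b) • B) *ᵥ c) ⬝ᵥ n)
      = fun s : ℝ => ∑ i, (∑ j, mexp ((s * b) • B) i j * c j) * n i := by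
    funext s; simp [dotProduct, Matrix.mulVec]
  rw [h]
  apply Finset.analyticOnNhd_fun_sum
  intro i _
  apply AnalyticOnNhd.mul _ analyticOnNhd_const
  apply Finset.analyticOnNhd_fun_sum
  intro j _
  exact (hentry i j).mul analyticOnNhd_const

lemma key (γ g : ℝ → ℝ) (hg : AnalyticOnNhd ℝ g Set.univ)
    (hd : ∀ s : ℝ, HasDerivAt γ (g s) s) (h0 : γ 0 = 0) :
    (∀ s : ℝ, γ s = 0) ∨ ∃ δ > 0, ∀ s : ℝ, s ≠ 0 → |s| < δ → γ s ≠ 0 := by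
  by_cases H : ∀ δ > (0:ℝ), ∃ s : ℝ, s ≠ 0 ∧ |s| < δ ∧ γ s = 0
  · left
    have hfreq : ∃ᶠ z in nhdsWithin (0:ℝ) {(0:ℝ)}ᶜ, g z = 0 := by
      rw [Filter.frequently_iff]
      intro U hU
      obtain ⟨ε, hε, hball⟩ := Metric.mem_nhdsWithin_iff.1 hU
      obtain ⟨s, hs0, hsε, hsz⟩ := H ε hε
      rcases lt_or_gt_of_ne hs0 with hlt | hgt
      · obtain ⟨x, hx, hgx⟩ := exists_hasDerivAt_eq_zero hlt
          (fun y _ => (hd y).continuousAt.continuousWithinAt) (hsz.trans h0.symm)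
          (fun y _ => hd y)
        refine ⟨x, hball ⟨?_, ?_⟩, hgx⟩
        · rw [Metric.mem_ball, Real.dist_eq, sub_zero]
          have : |x| < |s| := by
            rw [abs_of_neg hx.2, abs_of_neg hlt]
            exact neg_lt_neg hx.1
          exact this.trans hsε
        · exact Set.mem_compl_singleton_iff.2 (ne_of_lt hx.2)
      · obtain ⟨x, hx, hgx⟩ := exists_hasDerivAt_eq_zero hgt
          (fun y _ => (hd y).continuousAt.continuousWithinAt) (h0.trans hsz.symm)
          (fun y _ => hd y)
        refine ⟨x, hball ⟨?_, ?_⟩, hgx⟩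
        · rw [Metric.mem_ball, Real.dist_eq, sub_zero]
          have : |x| < |s| := by
            rw [abs_of_pos hx.1, abs_of_pos (lt_trans hx.1 hx.2)]
            exact hx.2
          exact this.trans hsε
        · exact Set.mem_compl_singleton_iff.2 (ne_of_gt hx.1)
    have hg0 : Set.EqOn g 0 Set.univ :=
      hg.eqOn_zero_of_preconnected_of_frequently_eq_zero isPreconnected_univ
        (Set.mem_univ 0) hfreq
    have hconst : ∀ s : ℝ, γ s = γ 0 := fun s =>
      is_const_of_deriv_eq_zero (fun x => (hd x).differentiableAt)
        (fun x => by rw [(hd x).deriv]; exact hg0 (Set.mem_univ x)) s 0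
    intro s; rw [hconst s, h0]
  · right
    push_neg at H
    obtain ⟨δ, hδ, hδ2⟩ := H
    exact ⟨δ, hδ, fun s hs hsd => hδ2 s hs hsd⟩


lemma main_formula (θ A : Matrix (Fin 2) (Fin 2) ℝ) (hcomm : A * θ = θ * A)
    (ξ n v : Fin 2 → ℝ) (t x : ℝ) (z : Fin 2 → ℝ) :
    (mexp ((-(t + x)) • θ) *ᵥ (A *ᵥ (v + mexp (t • θ) *ᵥ z) + Lam θ (t + x) *ᵥ ξ)) ⬝ᵥ n
      = (mexp ((-x) • θ) *ᵥ ((mexp ((-t) • θ) *ᵥ (A *ᵥ v + Lam θ t *ᵥ ξ))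
          + (A *ᵥ z + Lam θ x *ᵥ ξ))) ⬝ᵥ n := by
  have hsplit : mexp ((-(t + x)) • θ) = mexp ((-x) • θ) * mexp ((-t) • θ) := by
    have h : -(t + x) = -x + -t := by ring
    rw [h, mexp_add]
  have hAz : A *ᵥ (mexp (t • θ) *ᵥ z) = mexp (t • θ) *ᵥ (A *ᵥ z) := by
    rw [Matrix.mulVec_mulVec, Matrix.mulVec_mulVec, comm_mexp hcomm]
  have hLam : Lam θ (t + x) *ᵥ ξ = Lam θ t *ᵥ ξ + mexp (t • θ) *ᵥ (Lam θ x *ᵥ ξ) := by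
    rw [Lam_add, Matrix.add_mulVec, Matrix.mulVec_mulVec]
  have hinner : A *ᵥ (v + mexp (t • θ) *ᵥ z) + Lam θ (t + x) *ᵥ ξ
      = (A *ᵥ v + Lam θ t *ᵥ ξ) + mexp (t • θ) *ᵥ (A *ᵥ z + Lam θ x *ᵥ ξ) := by
    rw [Matrix.mulVec_add, hAz, hLam, Matrix.mulVec_add]
    abel
  rw [hinner, hsplit, ← Matrix.mulVec_mulVec, Matrix.mulVec_add, Matrix.mulVec_mulVec,
    mexp_mul_neg, Matrix.one_mulVec]

end Stmt16Aux

open Stmt16Aux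

/-- The group exponential of `G(θ)`. -/
noncomputable def expG (θ : Matrix (Fin 2) (Fin 2) ℝ) (p : ℝ × (Fin 2 → ℝ)) :
    ℝ × (Fin 2 → ℝ) :=
  if p.1 = 0 then (0, p.2) else (p.1, p.1⁻¹ • (Lam θ p.1 *ᵥ p.2))

theorem stmt16 (θ A : Matrix (Fin 2) (Fin 2) ℝ) (hcomm : A * θ = θ * A) (hA : A ≠ 0)
    (ξ n : Fin 2 → ℝ) (hn : n ≠ 0)
    (t : ℝ) (v : Fin 2 → ℝ) (hZ : Fu θ A ξ n (t, v) = 0)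
    (a : ℝ) (w : Fin 2 → ℝ) (γ : ℝ → ℝ)
    (hγ : ∀ s : ℝ, γ s = Fu θ A ξ n (Gmul θ (t, v) (expG θ (s • ((a, w) : ℝ × (Fin 2 → ℝ)))))) :
    (∀ s : ℝ, γ s = 0) ∨
      ∃ δ > 0, ∀ s : ℝ, s ≠ 0 → |s| < δ → γ s ≠ 0 := by
  classical
  set c : Fin 2 → ℝ := mexp ((-t) • θ) *ᵥ (A *ᵥ v + Lam θ t *ᵥ ξ) with hcdef
  have hc0 : c ⬝ᵥ n = 0 := hZ
  by_cases ha : a = 0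
  · subst ha
    have hγ' : ∀ s : ℝ, γ s = s * ((A *ᵥ w) ⬝ᵥ n) := by
      intro s
      rw [hγ s]
      have h1 : expG θ (s • (((0:ℝ), w) : ℝ × (Fin 2 → ℝ))) = ((0:ℝ), s • w) := by
        simp [expG, Prod.smul_mk, smul_eq_mul]
      rw [h1]
      show (mexp ((-(t + 0)) • θ) *ᵥ (A *ᵥ (v + mexp (t • θ) *ᵥ (s • w))
        + Lam θ (t + 0) *ᵥ ξ)) ⬝ᵥ n = s * ((A *ᵥ w) ⬝ᵥ n)
      rw [main_formula θ A hcomm ξ n v t 0 (s • w)]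
      rw [Lam_zero, Matrix.zero_mulVec, add_zero, neg_zero, mexp_zero, Matrix.one_mulVec,
        add_dotProduct, hc0, zero_add, Matrix.mulVec_smul, smul_dotProduct,
        smul_eq_mul]
    rcases eq_or_ne ((A *ᵥ w) ⬝ᵥ n) 0 with h | h
    · left; intro s; rw [hγ' s, h, mul_zero]
    · right
      exact ⟨1, one_pos, fun s hs _ => by rw [hγ' s]; exact mul_ne_zero hs h⟩
  · set m : Fin 2 → ℝ := a⁻¹ • (A *ᵥ w) + ξ with hmdef
    set k : ℝ → ℝ := fun u => (mexp (u • (-θ)) *ᵥ m) ⬝ᵥ n with hkdef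
    set φ : ℝ → ℝ := fun s => (mexp ((s * (-a)) • θ) *ᵥ c) ⬝ᵥ n with hφdef
    have hu : ∀ s : ℝ, expG θ (s • ((a, w) : ℝ × (Fin 2 → ℝ)))
        = (s * a, a⁻¹ • (Lam θ (s * a) *ᵥ w)) := by
      intro s
      by_cases hs : s = 0
      · subst hs
        simp [expG, Prod.smul_mk, smul_eq_mul, Lam_zero, Matrix.zero_mulVec]
      · have hsa : s * a ≠ 0 := mul_ne_zero hs ha
        show expG θ (s • a, s • w) = _
        rw [expG, smul_eq_mul]
        rw [if_neg hsa]
        simp only []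
        congr 1
        rw [Matrix.mulVec_smul, smul_smul]
        congr 1
        field_simp
    have hγ' : ∀ s : ℝ, γ s = φ s + ∫ u in (0:ℝ)..(s * a), k u := by
      intro s
      rw [hγ s, hu s]
      show (mexp ((-(t + s * a)) • θ) *ᵥ (A *ᵥ (v + mexp (t • θ) *ᵥ
          (a⁻¹ • (Lam θ (s * a) *ᵥ w))) + Lam θ (t + s * a) *ᵥ ξ)) ⬝ᵥ n = _
      rw [main_formula θ A hcomm ξ n v t (s * a) (a⁻¹ • (Lam θ (s * a) *ᵥ w))]
      have hAz : A *ᵥ (a⁻¹ • (Lam θ (s * a) *ᵥ w)) = Lam θ (s * a) *ᵥ (a⁻¹ • (A *ᵥ w)) := by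
        rw [Matrix.mulVec_smul, Matrix.mulVec_mulVec, comm_Lam hcomm, ← Matrix.mulVec_mulVec,
          Matrix.mulVec_smul]
      rw [hAz, ← Matrix.mulVec_add (Lam θ (s * a)), ← hmdef]
      rw [Matrix.mulVec_add, add_dotProduct]
      congr 1
      · have h2 : -(s * a) = s * (-a) := by ring
        rw [h2]
      · rw [Matrix.mulVec_mulVec, mexp_neg_mul_Lam, Lam_mulVec_dot]
    have hφan : AnalyticOnNhd ℝ φ Set.univ := analytic_dotexp θ (-a) c n
    have hkan : AnalyticOnNhd ℝ k Set.univ := by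
      have h := analytic_dotexp (-θ) 1 m n
      have he : (fun s : ℝ => (mexp ((s * 1) • (-θ)) *ᵥ m) ⬝ᵥ n)
          = fun u : ℝ => (mexp (u • (-θ)) *ᵥ m) ⬝ᵥ n := by
        funext u; rw [mul_one]
      rw [he] at h
      exact h
    have hkcont : Continuous k :=
      continuous_iff_continuousAt.2 fun x => (hkan x trivial).continuousAt
    have hH : ∀ x : ℝ, HasDerivAt (fun y => ∫ u in (0:ℝ)..y, k u) (k x) x := fun x =>
      intervalIntegral.integral_hasDerivAt_right (hkcont.intervalIntegrable _ _)
        (hkcont.stronglyMeasurableAtFilter _ _) hkcont.continuousAt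
    have hlin : AnalyticOnNhd ℝ (fun s : ℝ => s * a) Set.univ :=
      (analyticOnNhd_id).mul analyticOnNhd_const
    have hgan : AnalyticOnNhd ℝ (fun s => deriv φ s + k (s * a) * a) Set.univ :=
      (hφan.deriv).add ((hkan.comp hlin (Set.mapsTo_univ _ _)).mul analyticOnNhd_const)
    have hder : ∀ s : ℝ, HasDerivAt γ (deriv φ s + k (s * a) * a) s := by
      have hγfun : γ = fun s => φ s + ∫ u in (0:ℝ)..(s * a), k u := funext hγ'
      intro s
      rw [hγfun]
      have h1 : HasDerivAt φ (deriv φ s) s := ((hφan s trivial).differentiableAt).hasDerivAt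
      have h2 : HasDerivAt (fun y : ℝ => y * a) a s := by
        simpa using (hasDerivAt_id s).mul_const a
      have h3 : HasDerivAt (fun s : ℝ => ∫ u in (0:ℝ)..(s * a), k u) (k (s * a) * a) s :=
        HasDerivAt.comp (h₂ := fun y => ∫ u in (0:ℝ)..y, k u) s (hH (s * a)) h2
      exact h1.add h3
    have hγ0 : γ 0 = 0 := by
      rw [hγ' 0, zero_mul, intervalIntegral.integral_same, add_zero]
      show (mexp ((0 * -a) • θ) *ᵥ c) ⬝ᵥ n = 0
      rw [zero_mul, mexp_zero, Matrix.one_mulVec]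
      exact hc0
    exact key γ _ hgan hder hγ0
end

section
/- Let θ and A be real 2×2 matrices with Aθ = θA and A ≠ 0, let ξ ∈ ℝ², and let n ∈ ℝ² be nonzero. Let (t,v) ∈ ℝ × ℝ² satisfy F(t,v) ≠ 0, let (a,w) ∈ ℝ × ℝ², and define γ : ℝ → ℝ by γ(s) = F((t,v)·exp_G(s·(a,w))), where the product is taken in G(θ). Then the set {s ∈ ℝ : γ(s) = 0} is discrete: for every s₀ with γ(s₀) = 0 there exists δ > 0 such that γ(s) ≠ 0 for all s with 0 < |s − s₀| < δ. (That is, the exponential curve through a point outside the singular locus either stays off the singular locus or crosses it at a discrete set of times.) -/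
open Matrix

/- ### Auxiliary material -/

open NormedSpace

attribute [local instance] Matrix.linftyOpNormedRing Matrix.linftyOpNormedAlgebra

namespace Stmt17Aux

/-- Entry extraction as a continuous linear map. -/
noncomputable def eCLM {k : Type*} [Fintype k] [DecidableEq k] (i j : k) :
    Matrix k k ℝ →L[ℝ] ℝ :=
  LinearMap.toContinuousLinearMap (Matrix.entryLinearMap ℝ ℝ i j)

@[simp] lemma eCLM_apply {k : Type*} [Fintype k] [DecidableEq k] (i j : k)
    (M : Matrix k k ℝ) : eCLM i j M = M i j := rfl

lemma pow_inl_inl (Y C : Matrix (Fin 2) (Fin 2) ℝ) (m : ℕ) (i j : Fin 2) :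
    (((Matrix.fromBlocks Y C 0 0 : Matrix (Fin 2 ⊕ Fin 2) (Fin 2 ⊕ Fin 2) ℝ)) ^ m) (Sum.inl i) (Sum.inl j) = (Y ^ m) i j := by
  induction m generalizing i j with
  | zero => simp [Matrix.one_apply]
  | succ m ih =>
    rw [pow_succ, pow_succ]
    simp only [Matrix.mul_apply, Fintype.sum_sum_type, Matrix.fromBlocks_apply₁₁,
      Matrix.fromBlocks_apply₂₁, Matrix.zero_apply, mul_zero, Finset.sum_const_zero, add_zero]
    simp [ih]

lemma exp_inl_inl (Y C : Matrix (Fin 2) (Fin 2) ℝ) (i j : Fin 2) :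
    (NormedSpace.exp (Matrix.fromBlocks Y C 0 0 : Matrix (Fin 2 ⊕ Fin 2) (Fin 2 ⊕ Fin 2) ℝ)) (Sum.inl i) (Sum.inl j)
      = (NormedSpace.exp Y) i j := by
  rw [NormedSpace.exp_eq_tsum (𝕂 := ℝ), NormedSpace.exp_eq_tsum (𝕂 := ℝ)]
  beta_reduce
  have h1 := (eCLM (Sum.inl i) (Sum.inl j)).map_tsum
    (NormedSpace.expSeries_summable' (𝕂 := ℝ) (Matrix.fromBlocks Y C 0 0 : Matrix (Fin 2 ⊕ Fin 2) (Fin 2 ⊕ Fin 2) ℝ))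
  have h2 := (eCLM i j).map_tsum (NormedSpace.expSeries_summable' (𝕂 := ℝ) Y)
  simp only [eCLM_apply] at h1 h2
  rw [h1, h2]
  refine tsum_congr fun m => ?_
  simp [Matrix.smul_apply, pow_inl_inl]

/-- The big block matrix `[[θ, 1],[0,0]]`. -/
noncomputable def bigN (θ : Matrix (Fin 2) (Fin 2) ℝ) :
    Matrix (Fin 2 ⊕ Fin 2) (Fin 2 ⊕ Fin 2) ℝ :=
  Matrix.fromBlocks θ 1 0 0

lemma smul_bigN (θ : Matrix (Fin 2) (Fin 2) ℝ) (u : ℝ) :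
    u • (Matrix.fromBlocks θ 1 0 0 : Matrix (Fin 2 ⊕ Fin 2) (Fin 2 ⊕ Fin 2) ℝ)
      = Matrix.fromBlocks (u • θ) (u • (1 : Matrix (Fin 2) (Fin 2) ℝ)) 0 0 := by
  ext i j
  rcases i with i | i <;> rcases j with j | j <;> simp [bigN]

lemma continuous_mexp_entry (θ : Matrix (Fin 2) (Fin 2) ℝ) (i j : Fin 2) :
    Continuous fun s : ℝ => mexp (s • θ) i j := by
  have h1 : Continuous fun s : ℝ => NormedSpace.exp (s • θ) :=
    (NormedSpace.exp_continuous).comp (continuous_id.smul continuous_const)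
  have h2 : Continuous fun M : Matrix (Fin 2) (Fin 2) ℝ => M i j :=
    (eCLM i j).continuous
  exact h2.comp h1

lemma hasDerivAt_lam_entry (θ : Matrix (Fin 2) (Fin 2) ℝ) (i j : Fin 2) (u : ℝ) :
    HasDerivAt (fun r : ℝ => Lam θ r i j) (mexp (u • θ) i j) u := by
  have hc := continuous_mexp_entry θ i j
  have := intervalIntegral.integral_hasDerivAt_right
    (f := fun s : ℝ => mexp (s • θ) i j) (a := (0:ℝ)) (b := u)
    (hc.intervalIntegrable 0 u)
    (hc.stronglyMeasurableAtFilter _ _)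
    hc.continuousAt
  simpa [Lam] using this

lemma hasDerivAt_exp_entry (θ : Matrix (Fin 2) (Fin 2) ℝ) (i j : Fin 2) (u : ℝ) :
    HasDerivAt (fun r : ℝ => (NormedSpace.exp (r • bigN θ)) (Sum.inl i) (Sum.inr j))
      (mexp (u • θ) i j) u := by
  have h1 := hasDerivAt_exp_smul_const (𝕂 := ℝ) (bigN θ) u
  have h2 := (eCLM (Sum.inl i) (Sum.inr j)).hasFDerivAt.comp_hasDerivAt u h1
  have h3 : (NormedSpace.exp (u • bigN θ) * bigN θ) (Sum.inl i) (Sum.inr j)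
      = mexp (u • θ) i j := by
    show (∑ k, NormedSpace.exp (u • bigN θ) (Sum.inl i) k * bigN θ k (Sum.inr j)) = _
    rw [Fintype.sum_sum_type]
    simp only [bigN, Matrix.fromBlocks_apply₁₂, Matrix.fromBlocks_apply₂₂,
      Matrix.zero_apply, mul_zero, Finset.sum_const_zero, add_zero]
    rw [smul_bigN θ u, ]
    simp only [exp_inl_inl]
    rw [Finset.sum_eq_single j]
    · simp [mexp, Matrix.one_apply]
    · intro b _ hb
      simp [Matrix.one_apply, hb]
    · simp
  rw [← h3]
  exact h2

lemma lam_zero (θ : Matrix (Fin 2) (Fin 2) ℝ) : Lam θ 0 = 0 := by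
  ext i j
  simp [Lam]

lemma lam_eq (θ : Matrix (Fin 2) (Fin 2) ℝ) (r : ℝ) (i j : Fin 2) :
    Lam θ r i j = (NormedSpace.exp (r • bigN θ)) (Sum.inl i) (Sum.inr j) := by
  set f := fun u : ℝ => (NormedSpace.exp (u • bigN θ)) (Sum.inl i) (Sum.inr j) - Lam θ u i j
    with hf
  have hderiv : ∀ u : ℝ, HasDerivAt f 0 u := by
    intro u
    have := (hasDerivAt_exp_entry θ i j u).sub (hasDerivAt_lam_entry θ i j u)
    rw [sub_self] at this
    exact this
  have hconst : f r = f 0 :=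
    is_const_of_deriv_eq_zero (fun u => (hderiv u).differentiableAt)
      (fun u => (hderiv u).deriv) r 0
  have hf0 : f 0 = 0 := by
    simp [hf, lam_zero, Matrix.one_apply]
  have : f r = 0 := hconst.trans hf0
  have := sub_eq_zero.mp this
  linarith [this]

lemma analyticAt_exp_entry {k : Type*} [Fintype k] [DecidableEq k]
    (N : Matrix k k ℝ) {u : ℝ → ℝ} {x : ℝ} (hu : AnalyticAt ℝ u x) (i j : k) :
    AnalyticAt ℝ (fun s : ℝ => (NormedSpace.exp (u s • N)) i j) x := by
  have h1 : AnalyticAt ℝ (fun s : ℝ => u s • N) x := hu.smul analyticAt_const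
  have h2 : AnalyticAt ℝ (fun s : ℝ => NormedSpace.exp (u s • N)) x :=
    AnalyticAt.comp (g := NormedSpace.exp) (f := fun s : ℝ => u s • N)
      (NormedSpace.exp_analytic _) h1
  exact AnalyticAt.comp (g := fun M : Matrix k k ℝ => eCLM i j M)
    (f := fun s : ℝ => NormedSpace.exp (u s • N)) ((eCLM i j).analyticAt _) h2

lemma analyticAt_mexp_entry (θ : Matrix (Fin 2) (Fin 2) ℝ) {u : ℝ → ℝ} {x : ℝ}
    (hu : AnalyticAt ℝ u x) (i j : Fin 2) :
    AnalyticAt ℝ (fun s : ℝ => mexp (u s • θ) i j) x :=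
  analyticAt_exp_entry θ hu i j

lemma analyticAt_lam_entry (θ : Matrix (Fin 2) (Fin 2) ℝ) {u : ℝ → ℝ} {x : ℝ}
    (hu : AnalyticAt ℝ u x) (i j : Fin 2) :
    AnalyticAt ℝ (fun s : ℝ => Lam θ (u s) i j) x := by
  simp only [lam_eq]
  exact analyticAt_exp_entry (bigN θ) hu _ _

lemma AA.add' {f g : ℝ → ℝ} {x : ℝ} (hf : AnalyticAt ℝ f x) (hg : AnalyticAt ℝ g x) :
    AnalyticAt ℝ (fun s => f s + g s) x := hf.add hg

/-- Isolated zeros for a globally analytic function which is nonzero somewhere. -/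
lemma isolated (γ : ℝ → ℝ) (han : ∀ x : ℝ, AnalyticAt ℝ γ x) (h0 : γ 0 ≠ 0) :
    ∀ s₀ : ℝ, γ s₀ = 0 →
      ∃ δ > 0, ∀ s : ℝ, s ≠ s₀ → |s - s₀| < δ → γ s ≠ 0 := by
  intro s₀ _
  rcases (han s₀).eventually_eq_zero_or_eventually_ne_zero with h | h
  · exfalso
    apply h0
    have heq : Set.EqOn γ 0 Set.univ :=
      AnalyticOnNhd.eqOn_zero_of_preconnected_of_eventuallyEq_zero
        (fun x _ => han x) isPreconnected_univ (Set.mem_univ s₀)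
        (h.mono fun z hz => by simpa using hz)
    simpa using heq (Set.mem_univ 0)
  · rw [eventually_nhdsWithin_iff] at h
    rcases Metric.eventually_nhds_iff.mp h with ⟨δ, hδ, hball⟩
    refine ⟨δ, hδ, fun s hne hlt => ?_⟩
    exact hball (by simpa [Real.dist_eq] using hlt) (by simpa using hne)

end Stmt17Aux

open Stmt17Aux

theorem stmt17 (θ A : Matrix (Fin 2) (Fin 2) ℝ) (hcomm : A * θ = θ * A) (hA : A ≠ 0)
    (ξ n : Fin 2 → ℝ) (hn : n ≠ 0)
    (t : ℝ) (v : Fin 2 → ℝ) (hZ : Fu θ A ξ n (t, v) ≠ 0)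
    (a : ℝ) (w : Fin 2 → ℝ) (γ : ℝ → ℝ)
    (hγ : ∀ s : ℝ, γ s = Fu θ A ξ n (Gmul θ (t, v) (expG θ (s • ((a, w) : ℝ × (Fin 2 → ℝ)))))) :
    ∀ s₀ : ℝ, γ s₀ = 0 →
      ∃ δ > 0, ∀ s : ℝ, s ≠ s₀ → |s - s₀| < δ → γ s ≠ 0 := by
  classical
  -- the second component of the exponential curve
  set c : ℝ → (Fin 2 → ℝ) :=
    fun s => if a = 0 then s • w else a⁻¹ • (Lam θ (s * a) *ᵥ w) with hc_def
  -- explicit formula for γ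
  have hexpG : ∀ s : ℝ, expG θ (s • ((a, w) : ℝ × (Fin 2 → ℝ))) = (s * a, c s) := by
    intro s
    by_cases ha : a = 0
    · simp [expG, Prod.smul_def, smul_eq_mul, ha, hc_def]
    · by_cases hs : s = 0
      · simp [expG, Prod.smul_def, smul_eq_mul, hs, hc_def, ha, lam_zero]
        ext i; fin_cases i <;> rfl
      · have hsa : s * a ≠ 0 := mul_ne_zero hs ha
        simp only [expG, Prod.smul_def, smul_eq_mul, hsa, if_neg, if_false, hc_def, ha]
        refine Prod.ext rfl ?_
        simp only [Matrix.mulVec_smul]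
        rw [smul_comm]
        rw [smul_smul]
        congr 1
        field_simp
  have hform : ∀ s : ℝ,
      γ s = (mexp ((-(t + s * a)) • θ) *ᵥ
        (A *ᵥ (v + mexp (t • θ) *ᵥ c s) + Lam θ (t + s * a) *ᵥ ξ)) ⬝ᵥ n := by
    intro s
    rw [hγ, hexpG]
    rfl
  -- γ 0 ≠ 0
  have hc0 : c 0 = 0 := by
    by_cases ha : a = 0 <;> simp [hc_def, ha, lam_zero]
  have hγ0 : γ 0 ≠ 0 := by
    rw [hform 0, hc0]
    simpa [Fu] using hZ
  -- analyticity of each coordinate of c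
  have hcA : ∀ (l : Fin 2) (x : ℝ), AnalyticAt ℝ (fun s => c s l) x := by
    intro l x
    by_cases ha : a = 0
    · simp only [hc_def, ha, if_true, Pi.smul_apply, smul_eq_mul]
      exact analyticAt_id.mul analyticAt_const
    · simp only [hc_def, ha, if_false, Pi.smul_apply, smul_eq_mul, Matrix.mulVec,
        dotProduct]
      apply AnalyticAt.mul analyticAt_const
      apply Finset.analyticAt_fun_sum
      intro m _
      exact (analyticAt_lam_entry θ (analyticAt_id.mul analyticAt_const) l m).mul
        analyticAt_const
  -- analyticity of γ
  have huaff : ∀ x : ℝ, AnalyticAt ℝ (fun s : ℝ => t + s * a) x := fun x =>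
    AA.add' analyticAt_const (analyticAt_id.mul analyticAt_const)
  have hAn : ∀ x : ℝ, AnalyticAt ℝ γ x := by
    intro x
    rw [funext hform]
    simp only [Matrix.mulVec, dotProduct, Pi.add_apply]
    apply Finset.analyticAt_fun_sum
    intro i _
    apply AnalyticAt.mul ?_ analyticAt_const
    apply Finset.analyticAt_fun_sum
    intro j _
    apply AnalyticAt.mul
    · exact analyticAt_mexp_entry θ ((huaff x).neg) i j
    · apply AA.add'
      · apply Finset.analyticAt_fun_sum
        intro k _
        apply AnalyticAt.mul analyticAt_const
        apply AA.add' analyticAt_const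
        apply Finset.analyticAt_fun_sum
        intro l _
        exact AnalyticAt.mul analyticAt_const (hcA l x)
      · apply Finset.analyticAt_fun_sum
        intro k _
        exact (analyticAt_lam_entry θ (huaff x) j k).mul analyticAt_const
  exact isolated γ hAn hγ0
end

section
/- Let A be a real 2×2 matrix with (tr A)² − 4·det A < 0 (i.e. A has non-real complex eigenvalues) and tr A ≠ 0, let u, v ∈ ℝ² be nonzero vectors, let τ ∈ ℝ, and define γ : ℝ → ℝ by γ(t) = ⟨exp(tA)u, v⟩ + τ. Then the set {t ∈ ℝ : γ(t) = 0} is infinite, and every point of it is isolated: for each t₀ with γ(t₀) = 0 there is δ > 0 such that γ(t) ≠ 0 whenever 0 < |t − t₀| < δ. -/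
open Matrix

namespace Stmt19Aux

open NormedSpace Real Filter Set


open NormedSpace Real Filter Set

abbrev M2 := Matrix (Fin 2) (Fin 2) ℝ

noncomputable def phi (b : ℝ) (B : M2) : ℂ → M2 := fun z => z.re • (1 : M2) + (z.im / b) • B

noncomputable def phiHom (b : ℝ) (B : M2) (hb : b ≠ 0) (hB : B * B = (-(b^2)) • (1 : M2)) :
    ℂ →+* M2 where
  toFun := phi b B
  map_one' := by simp [phi]
  map_mul' z w := by
    simp only [phi, Complex.mul_re, Complex.mul_im, add_mul, mul_add, smul_mul_assoc,
      mul_smul_comm, one_mul, mul_one, hB, smul_smul]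
    match_scalars <;> field_simp <;> ring
  map_zero' := by simp [phi]
  map_add' z w := by
    simp only [phi, Complex.add_re, Complex.add_im]
    match_scalars <;> ring

lemma phi_continuous (b : ℝ) (B : M2) : Continuous (phi b B) := by
  exact (Complex.continuous_re.smul continuous_const).add
    ((Complex.continuous_im.div_const b).smul continuous_const)

lemma exp_eq (a b : ℝ) (B : M2) (hb : b ≠ 0) (hB : B * B = (-(b^2)) • (1 : M2)) (t : ℝ) :
    NormedSpace.exp (t • (a • (1 : M2) + B)) =
      (Real.exp (a*t) * Real.cos (b*t)) • (1 : M2)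
        + (Real.exp (a*t) * Real.sin (b*t) / b) • B := by
  letI : SeminormedRing M2 := Matrix.linftyOpSemiNormedRing
  letI : NormedRing M2 := Matrix.linftyOpNormedRing
  letI : NormedAlgebra ℝ M2 := Matrix.linftyOpNormedAlgebra
  have h1 : t • (a • (1 : M2) + B) = phiHom b B hb hB (⟨a*t, b*t⟩ : ℂ) := by
    show _ = phi b B _
    unfold phi
    match_scalars <;> field_simp <;> ring
  erw [h1, ← map_exp (phiHom b B hb hB) (phi_continuous b B)]
  have h2 : NormedSpace.exp (⟨a*t, b*t⟩ : ℂ) = Complex.exp (⟨a*t, b*t⟩ : ℂ) := by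
    rw [Complex.exp_eq_exp_ℂ]
  rw [h2]
  show phi b B _ = _
  unfold phi
  rw [Complex.exp_re, Complex.exp_im]




lemma analytic_aux (a w : ℂ) (τ : ℝ) :
    AnalyticOnNhd ℝ (fun t : ℝ => (Complex.exp (a * t) * w).re + τ) Set.univ := by
  intro x _
  have h1 : AnalyticAt ℝ (fun t : ℝ => (t : ℂ)) x := Complex.ofRealCLM.analyticAt x
  have h2 : AnalyticAt ℝ (fun t : ℝ => a * (t : ℂ)) x := analyticAt_const.mul h1
  have h3 : AnalyticAt ℝ Complex.exp (a * x) := analyticAt_cexp.restrictScalars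
  have h4 : AnalyticAt ℝ (fun t : ℝ => Complex.exp (a * t)) x :=
    AnalyticAt.comp (f := fun t : ℝ => a * (t : ℂ)) h3 h2
  have h5 : AnalyticAt ℝ (fun t : ℝ => Complex.exp (a * t) * w) x := h4.mul analyticAt_const
  exact ((Complex.reCLM.analyticAt _).comp h5).add analyticAt_const

lemma re_form (a b c d : ℝ) (t : ℝ) :
    (Complex.exp ((⟨a, b⟩ : ℂ) * t) * (⟨c, -d⟩ : ℂ)).re
      = Real.exp (a*t) * Real.cos (b*t) * c + Real.exp (a*t) * Real.sin (b*t) * d := by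
  simp only [Complex.mul_re, Complex.mul_im, Complex.exp_re, Complex.exp_im,
    Complex.ofReal_re, Complex.ofReal_im]
  ring_nf


lemma key (a b c d τ : ℝ) (ha : 0 < a) (hb : 0 < b) (hcd : c ≠ 0 ∨ d ≠ 0)
    (γ : ℝ → ℝ)
    (hγ : ∀ t, γ t = Real.exp (a*t) * Real.cos (b*t) * c
      + Real.exp (a*t) * Real.sin (b*t) * d + τ) :
    {t : ℝ | γ t = 0}.Infinite ∧
      ∀ t₀ : ℝ, γ t₀ = 0 → ∃ δ > 0, ∀ t : ℝ, t ≠ t₀ → |t - t₀| < δ → γ t ≠ 0 := by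
  have hb' : b ≠ 0 := ne_of_gt hb
  set h : ℝ → ℝ := fun t => Real.exp (a*t) * Real.cos (b*t) * c
      + Real.exp (a*t) * Real.sin (b*t) * d with hh
  have hγ' : ∀ t, γ t = h t + τ := hγ
  have pipos := Real.pi_pos
  set T : ℝ := 2 * Real.pi / b with hT
  have hTpos : 0 < T := by positivity
  have hstep : ∀ t, h (t + T) = Real.exp (a*T) * h t := by
    intro t
    have e1 : b * (t + T) = b * t + 2 * Real.pi := by
      rw [hT, mul_add, mul_div_assoc', mul_comm b (2*Real.pi), mul_div_assoc, div_self hb', mul_one]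
    have e2 : a * (t + T) = a * t + a * T := by ring
    simp only [hh, e1, e2, Real.cos_add_two_pi, Real.sin_add_two_pi, Real.exp_add]
    ring
  have hiter : ∀ t (n : ℕ), h (t + n * T) = (Real.exp (a*T))^n * h t := by
    intro t n
    induction n with
    | zero => simp
    | succ n ih =>
      have : t + (n+1 : ℕ) * T = (t + n * T) + T := by push_cast; ring
      rw [this, hstep, ih]
      push_cast
      ring
  have hr : 1 < Real.exp (a*T) := by
    have h1 : 0 < a * T := by positivity
    linarith [Real.add_one_le_exp (a*T)]
  have hflip : ∀ t, h (t + Real.pi/b) = -(Real.exp (a*(Real.pi/b)) * h t) := by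
    intro t
    have e1 : b * (t + Real.pi/b) = b * t + Real.pi := by field_simp
    have e2 : a * (t + Real.pi/b) = a * t + a * (Real.pi/b) := by ring
    simp only [hh, e1, e2, Real.cos_add_pi, Real.sin_add_pi, Real.exp_add]
    ring
  have ht0 : ∃ t, h t ≠ 0 := by
    rcases hcd with hc | hd
    · exact ⟨0, by simpa [hh] using hc⟩
    · refine ⟨Real.pi / (2*b), ?_⟩
      have e1 : b * (Real.pi / (2*b)) = Real.pi / 2 := by field_simp
      have e2 : h (Real.pi/(2*b)) = Real.exp (a*(Real.pi/(2*b))) * d := by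
        simp [hh, e1]
      rw [e2]
      exact mul_ne_zero (Real.exp_ne_zero _) hd
  obtain ⟨t₀', ht₀'⟩ := ht0
  have hpq : (∃ p, 0 < h p) ∧ (∃ q, h q < 0) := by
    rcases lt_or_gt_of_ne ht₀' with hlt | hgt
    · refine ⟨⟨t₀' + Real.pi/b, ?_⟩, ⟨t₀', hlt⟩⟩
      rw [hflip]
      have he := Real.exp_pos (a*(Real.pi/b))
      nlinarith [mul_pos he (neg_pos.mpr hlt)]
    · refine ⟨⟨t₀', hgt⟩, ⟨t₀' + Real.pi/b, ?_⟩⟩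
      rw [hflip]
      have he := Real.exp_pos (a*(Real.pi/b))
      nlinarith [mul_pos he hgt]
  obtain ⟨⟨p, hp⟩, ⟨q, hq⟩⟩ := hpq
  -- tendsto facts
  have hpow : Tendsto (fun n : ℕ => (Real.exp (a*T))^n) atTop atTop :=
    tendsto_pow_atTop_atTop_of_one_lt hr
  have htp : Tendsto (fun n : ℕ => γ (p + n * T)) atTop atTop := by
    have : (fun n : ℕ => γ (p + n * T)) = fun n : ℕ => (Real.exp (a*T))^n * h p + τ := by
      funext n; rw [hγ', hiter]
    rw [this]
    exact tendsto_atTop_add_const_right _ τ (hpow.atTop_mul_const hp)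
  have htq : Tendsto (fun n : ℕ => γ (q + n * T)) atTop atBot := by
    have : (fun n : ℕ => γ (q + n * T)) = fun n : ℕ => (Real.exp (a*T))^n * h q + τ := by
      funext n; rw [hγ', hiter]
    rw [this]
    exact tendsto_atBot_add_const_right _ τ (hpow.atTop_mul_const_of_neg hq)
  have hcont : Continuous γ := by
    have : γ = fun t : ℝ => h t + τ := funext hγ'
    rw [this, hh]
    fun_prop
  have hseqp : Tendsto (fun n : ℕ => p + n * T) atTop atTop := by
    apply tendsto_atTop_add_const_left
    exact (tendsto_natCast_atTop_atTop (R := ℝ)).atTop_mul_const hTpos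
  have hseqq : Tendsto (fun n : ℕ => q + n * T) atTop atTop := by
    apply tendsto_atTop_add_const_left
    exact (tendsto_natCast_atTop_atTop (R := ℝ)).atTop_mul_const hTpos
  have haspos : ∀ M : ℝ, ∃ t, M < t ∧ 0 < γ t := by
    intro M
    obtain ⟨n, h1, h2⟩ :=
      ((htp.eventually_gt_atTop 0).and (hseqp.eventually_gt_atTop M)).exists
    exact ⟨p + n * T, h2, h1⟩
  have hasneg : ∀ M : ℝ, ∃ t, M < t ∧ γ t < 0 := by
    intro M
    obtain ⟨n, h1, h2⟩ :=
      ((htq.eventually_lt_atBot 0).and (hseqq.eventually_gt_atTop M)).exists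
    exact ⟨q + n * T, h2, h1⟩
  constructor
  · apply Set.infinite_of_not_bddAbove
    rw [not_bddAbove_iff]
    intro M
    obtain ⟨t1, hM1, h1⟩ := haspos M
    obtain ⟨t2, hM2, h2⟩ := hasneg M
    have h0mem : (0:ℝ) ∈ Set.uIcc (γ t1) (γ t2) := by
      rw [Set.mem_uIcc]
      right
      exact ⟨le_of_lt h2, le_of_lt h1⟩
    obtain ⟨z, hz, hz0⟩ := intermediate_value_uIcc (f := γ) (a := t1) (b := t2)
      hcont.continuousOn h0mem
    refine ⟨z, hz0, ?_⟩
    rcases Set.mem_uIcc.mp hz with ⟨hzl, _⟩ | ⟨hzl, _⟩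
    · exact lt_of_lt_of_le hM1 hzl
    · exact lt_of_lt_of_le hM2 hzl
  · obtain ⟨a0, _, ha0⟩ := haspos 0
    have han : AnalyticOnNhd ℝ γ Set.univ := by
      have : γ = fun t : ℝ => (Complex.exp ((⟨a, b⟩ : ℂ) * (t:ℂ)) * (⟨c, -d⟩ : ℂ)).re + τ := by
        funext t; rw [hγ', re_form]
      rw [this]
      exact analytic_aux _ _ _
    intro t₀ h0
    by_contra hcon
    push_neg at hcon
    have hfreq : ∃ᶠ z in nhdsWithin t₀ {t₀}ᶜ, γ z = 0 := by
      rw [Filter.frequently_iff]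
      intro U hU
      rw [Metric.mem_nhdsWithin_iff] at hU
      obtain ⟨δ, hδ, hsub⟩ := hU
      obtain ⟨t, ht, htδ, ht0⟩ := hcon δ hδ
      exact ⟨t, hsub ⟨by simpa [Real.dist_eq] using htδ, ht⟩, ht0⟩
    have heq := han.eqOn_zero_of_preconnected_of_frequently_eq_zero
      isPreconnected_univ (Set.mem_univ t₀) hfreq
    have : γ a0 = 0 := heq (Set.mem_univ a0)
    linarith


lemma key' (a b c d τ : ℝ) (ha : a ≠ 0) (hb : 0 < b) (hcd : c ≠ 0 ∨ d ≠ 0)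
    (γ : ℝ → ℝ)
    (hγ : ∀ t, γ t = Real.exp (a*t) * Real.cos (b*t) * c
      + Real.exp (a*t) * Real.sin (b*t) * d + τ) :
    {t : ℝ | γ t = 0}.Infinite ∧
      ∀ t₀ : ℝ, γ t₀ = 0 → ∃ δ > 0, ∀ t : ℝ, t ≠ t₀ → |t - t₀| < δ → γ t ≠ 0 := by
  rcases ha.lt_or_gt with hneg | hpos
  · have hd' : c ≠ 0 ∨ -d ≠ 0 := hcd.imp id (fun h => neg_ne_zero.mpr h)
    have hγ2 : ∀ t, γ (-t) = Real.exp ((-a)*t) * Real.cos (b*t) * c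
        + Real.exp ((-a)*t) * Real.sin (b*t) * (-d) + τ := by
      intro t
      have e1 : a * (-t) = (-a) * t := by ring
      have e2 : b * (-t) = -(b*t) := by ring
      rw [hγ, e1, e2, Real.cos_neg, Real.sin_neg]
      ring
    obtain ⟨hinf, hiso⟩ := key (-a) b c (-d) τ (by linarith) hb hd' (fun t => γ (-t)) hγ2
    constructor
    · have himg : {t : ℝ | γ t = 0} = (fun t : ℝ => -t) '' {t : ℝ | γ (-t) = 0} := by
        ext t
        simp only [Set.mem_image, Set.mem_setOf_eq]
        constructor
        · intro h; exact ⟨-t, by simpa using h, by ring⟩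
        · rintro ⟨s, hs, rfl⟩; simpa using hs
      rw [himg]
      exact hinf.image (fun x _ y _ h => neg_injective h)
    · intro t₀ h0
      obtain ⟨δ, hδ, hδ'⟩ := hiso (-t₀) (by simpa using h0)
      refine ⟨δ, hδ, fun t ht htδ => ?_⟩
      have h1 : (-t) ≠ (-t₀) := fun hh => ht (neg_injective hh)
      have h2 : |(-t) - (-t₀)| < δ := by
        rw [show (-t) - (-t₀) = -(t - t₀) by ring, abs_neg]; exact htδ
      simpa using hδ' (-t) h1 h2
  · exact key a b c d τ hpos hb hcd γ hγ



lemma Bsq (A : M2) (hA : A.trace^2 - 4*A.det < 0) :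
    (A - (A.trace/2) • 1) * (A - (A.trace/2) • 1)
      = (-((Real.sqrt (4*A.det - A.trace^2)/2)^2)) • (1 : M2) := by
  have hdisc : (0:ℝ) ≤ 4*A.det - A.trace^2 := by linarith
  have βsq : (Real.sqrt (4*A.det - A.trace^2)/2)^2 = (4*A.det - A.trace^2)/4 := by
    rw [div_pow, Real.sq_sqrt hdisc]; norm_num
  have htr := Matrix.trace_fin_two A
  have hdet := Matrix.det_fin_two A
  rw [βsq]
  ext i j
  fin_cases i <;> fin_cases j <;>
    simp only [Matrix.mul_apply, Fin.sum_univ_two, Matrix.one_apply, Matrix.sub_apply,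
      Matrix.smul_apply, Fin.isValue, ite_true, ite_false, smul_eq_mul, mul_one, mul_zero,
      Matrix.cons_val', Matrix.cons_val_zero, Matrix.cons_val_one, Matrix.head_cons,
      Matrix.head_fin_const, ne_eq, zero_ne_one, one_ne_zero, if_true, if_false,
      Fin.zero_eta, Fin.mk_one]
  · linear_combination hdet - A 0 0 * htr
  · linear_combination (- A 0 1) * htr
  · linear_combination (- A 1 0) * htr
  · linear_combination hdet - A 1 1 * htr

lemma nondeg (b : ℝ) (hb : 0 < b) (B : M2) (hB : B * B = (-(b^2)) • (1:M2))
    (hsum : B 0 0 + B 1 1 = 0)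
    (u v : Fin 2 → ℝ) (hu : u ≠ 0) (hv : v ≠ 0) :
    u ⬝ᵥ v ≠ 0 ∨ (B *ᵥ u) ⬝ᵥ v ≠ 0 := by
  by_contra hcon
  push_neg at hcon
  obtain ⟨hc, he⟩ := hcon
  have hrel : B 0 0 ^ 2 + B 0 1 * B 1 0 = -(b^2) := by
    have h00 := congrFun (congrFun hB 0) 0
    simpa [Matrix.mul_apply, Fin.sum_univ_two, Matrix.smul_apply, Matrix.one_apply, sq]
      using h00
  have hc' : u 0 * v 0 + u 1 * v 1 = 0 := by
    simpa [dotProduct, Fin.sum_univ_two] using hc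
  have he' : (B 0 0 * u 0 + B 0 1 * u 1) * v 0 + (B 1 0 * u 0 + B 1 1 * u 1) * v 1 = 0 := by
    simpa [Matrix.mulVec, dotProduct, Fin.sum_univ_two] using he
  have hb10 : B 1 0 ≠ 0 := by
    intro h0
    rw [h0] at hrel
    nlinarith [sq_nonneg (B 0 0), hb]
  set D := u 0 * (B 1 0 * u 0 + B 1 1 * u 1) - u 1 * (B 0 0 * u 0 + B 0 1 * u 1) with hD
  have hDpos : B 1 0 * D = (B 1 0 * u 0 - B 0 0 * u 1)^2 + b^2 * u 1^2 := by
    rw [hD]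
    linear_combination (B 1 0 * u 0 * u 1) * hsum - u 1^2 * hrel
  have hDne : D ≠ 0 := by
    intro h0
    rw [h0, mul_zero] at hDpos
    have h1sq : u 1 ^ 2 = 0 := by
      nlinarith [sq_nonneg (B 1 0 * u 0 - B 0 0 * u 1), sq_nonneg (u 1), mul_pos hb hb]
    have h1 : u 1 = 0 := by
      exact pow_eq_zero_iff two_ne_zero |>.mp h1sq
    have h4 : (B 1 0 * u 0 - B 0 0 * u 1)^2 = 0 := by nlinarith [sq_nonneg (u 1)]
    have h5 : B 1 0 * u 0 - B 0 0 * u 1 = 0 := by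
      exact pow_eq_zero_iff two_ne_zero |>.mp h4
    have h6 : B 1 0 * u 0 = 0 := by rw [h1] at h5; linarith
    have h7 : u 0 = 0 := (mul_eq_zero.mp h6).resolve_left hb10
    apply hu
    funext i
    fin_cases i
    · simpa using h7
    · simpa using h1
  have hv0 : v 0 = 0 := by
    have h3 : D * v 0 = 0 := by
      rw [hD]
      linear_combination (B 1 0 * u 0 + B 1 1 * u 1) * hc' - u 1 * he'
    exact (mul_eq_zero.mp h3).resolve_left hDne
  have hv1 : v 1 = 0 := by
    have h3 : D * v 1 = 0 := by
      rw [hD]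
      linear_combination u 0 * he' - (B 0 0 * u 0 + B 0 1 * u 1) * hc'
    exact (mul_eq_zero.mp h3).resolve_left hDne
  apply hv
  funext i
  fin_cases i
  · simpa using hv0
  · simpa using hv1

end Stmt19Aux

theorem stmt19 (A : Matrix (Fin 2) (Fin 2) ℝ) (hA : A.trace ^ 2 - 4 * A.det < 0)
    (htr : A.trace ≠ 0)
    (u v : Fin 2 → ℝ) (hu : u ≠ 0) (hv : v ≠ 0) (τ : ℝ) (γ : ℝ → ℝ)
    (hγ : ∀ t : ℝ, γ t = (mexp (t • A) *ᵥ u) ⬝ᵥ v + τ) :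
    {t : ℝ | γ t = 0}.Infinite ∧
      ∀ t₀ : ℝ, γ t₀ = 0 →
        ∃ δ > 0, ∀ t : ℝ, t ≠ t₀ → |t - t₀| < δ → γ t ≠ 0 := by
  have hdisc : (0:ℝ) < 4*A.det - A.trace^2 := by linarith
  set a : ℝ := A.trace / 2 with ha_def
  set b : ℝ := Real.sqrt (4*A.det - A.trace^2) / 2 with hb_def
  have hb : 0 < b := div_pos (Real.sqrt_pos.mpr hdisc) two_pos
  set B : Stmt19Aux.M2 := A - a • 1 with hB_def
  have hB : B * B = (-(b^2)) • (1:Stmt19Aux.M2) := Stmt19Aux.Bsq A hA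
  have ha : a ≠ 0 := div_ne_zero htr two_ne_zero
  have hsum : B 0 0 + B 1 1 = 0 := by
    have htr2 := Matrix.trace_fin_two A
    simp only [hB_def, Matrix.sub_apply, Matrix.smul_apply, Matrix.one_apply, if_true,
      if_false, ite_true, ite_false, smul_eq_mul, mul_one, ha_def, ne_eq, zero_ne_one,
      one_ne_zero]
    linarith
  have hAeq : a • (1:Stmt19Aux.M2) + B = A := by rw [hB_def]; abel
  have hγ' : ∀ t, γ t = Real.exp (a*t) * Real.cos (b*t) * (u ⬝ᵥ v)
      + Real.exp (a*t) * Real.sin (b*t) * (((B *ᵥ u) ⬝ᵥ v) / b) + τ := by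
    intro t
    rw [hγ t]
    have ht : t • A = t • (a • (1:Stmt19Aux.M2) + B) := by rw [hAeq]
    show NormedSpace.exp (t • A) *ᵥ u ⬝ᵥ v + τ = _
    rw [ht, Stmt19Aux.exp_eq a b B hb.ne' hB]
    congr 1
    rw [Matrix.add_mulVec, add_dotProduct, Matrix.smul_mulVec,
      Matrix.smul_mulVec, Matrix.one_mulVec, smul_dotProduct,
      smul_dotProduct, smul_eq_mul, smul_eq_mul]
    field_simp
  have hcd : (u ⬝ᵥ v) ≠ 0 ∨ (((B *ᵥ u) ⬝ᵥ v) / b) ≠ 0 := by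
    rcases Stmt19Aux.nondeg b hb B hB hsum u v hu hv with h | h
    · exact Or.inl h
    · exact Or.inr (div_ne_zero h hb.ne')
  exact Stmt19Aux.key' a b _ _ τ ha hb hcd γ hγ'
end
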